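/- arXiv:0705.1948 — 3 statements merged into one kernel-verified Lean document; each statement's English description precedes it below -/
import Mathlib

section
/- Let 1 < q' < ∞ and let Γ = {(z,t) ∈ ℝⁿ×(0,∞) : |z| < t} be equipped with the measure dz dt/t^{n+1}. Then there is a constant C (depending on n, q') such that for all x ∈ ℝⁿ and s > 0, ∫_Γ (s·t)^{q'}/(s+t+|x|)^{(n+2)q'} · dz dt/t^{n+1} ≤ C · s^{q'}/(s+|x|)^{(n+1)q'}. -/
open MeasureTheory

/-- The cone `Γ = {(z,t) ∈ ℝⁿ×(0,∞) : |z| < t}`. -/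
def cone (n : ℕ) : Set (EuclideanSpace ℝ (Fin n) × ℝ) := {p | ‖p.1‖ < p.2}

/-- The measure `dz dt / t^{n+1}` on `ℝⁿ × ℝ`. -/
noncomputable def coneMeasure (n : ℕ) : Measure (EuclideanSpace ℝ (Fin n) × ℝ) :=
  volume.withDensity (fun p => ENNReal.ofReal (p.2 ^ (-((n : ℝ) + 1))))

open Set Metric in
/-- Volume of a ball of positive radius in `EuclideanSpace ℝ (Fin n)`. -/
lemma ballVol (n : ℕ) {t : ℝ} (ht : 0 < t) :
    volume (Metric.ball (0 : EuclideanSpace ℝ (Fin n)) t)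
      = ENNReal.ofReal (t ^ (n : ℝ)) * volume (Metric.ball (0 : EuclideanSpace ℝ (Fin n)) 1) := by
  rcases Nat.eq_zero_or_pos n with hn | hn
  · subst hn
    simp only [Nat.cast_zero, Real.rpow_zero, ENNReal.ofReal_one, one_mul]
    have huniv : ∀ r : ℝ, 0 < r → Metric.ball (0 : EuclideanSpace ℝ (Fin 0)) r = Set.univ := by
      intro r hr; ext z
      simp [Metric.mem_ball, show z = 0 from Subsingleton.elim z 0, hr]
    rw [huniv t ht, huniv 1 one_pos]
  · haveI : Nonempty (Fin n) := ⟨⟨0, hn⟩⟩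
    haveI : Nontrivial (EuclideanSpace ℝ (Fin n)) := inferInstance
    rw [Measure.addHaar_ball volume (0 : EuclideanSpace ℝ (Fin n)) ht.le,
      finrank_euclideanSpace_fin, Real.rpow_natCast]

open Set in
/-- The key one-dimensional estimate. -/
lemma keyOneDim (q' M A : ℝ) (h1 : 0 < q') (h2 : q' < M) (hA : 0 < A) :
    ∫⁻ t in Ioi (0:ℝ), ENNReal.ofReal (t ^ (q' - 1) / (A + t) ^ M)
      ≤ ENNReal.ofReal ((1 / q' + 1 / (M - q')) * A ^ (q' - M)) := by
  have hM : 0 < M := h1.trans h2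
  have hsplit : Ioi (0:ℝ) = Ioc 0 A ∪ Ioi A := (Ioc_union_Ioi_eq_Ioi hA.le).symm
  rw [hsplit, lintegral_union measurableSet_Ioi (Set.Ioc_disjoint_Ioi le_rfl)]
  have p1 : ∫⁻ t in Ioc (0:ℝ) A, ENNReal.ofReal (t ^ (q' - 1) / (A + t) ^ M)
      ≤ ENNReal.ofReal (A ^ (q' - M) / q') := by
    have mono : ∫⁻ t in Ioc (0:ℝ) A, ENNReal.ofReal (t ^ (q' - 1) / (A + t) ^ M)
        ≤ ∫⁻ t in Ioc (0:ℝ) A, ENNReal.ofReal (A ^ (-M) * t ^ (q' - 1)) := by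
      refine setLIntegral_mono (by fun_prop) ?_
      intro t ht
      apply ENNReal.ofReal_le_ofReal
      have ht0 : 0 < t := ht.1
      have h1' : (0:ℝ) < (A + t) ^ M := Real.rpow_pos_of_pos (by linarith) M
      have h2' : A ^ M ≤ (A + t) ^ M := Real.rpow_le_rpow hA.le (by linarith) hM.le
      rw [div_eq_mul_inv, Real.rpow_neg hA.le, mul_comm (A ^ M)⁻¹]
      exact mul_le_mul_of_nonneg_left (inv_anti₀ (Real.rpow_pos_of_pos hA M) h2')
        (Real.rpow_nonneg ht0.le _)
    have eq1 : ∫⁻ t in Ioc (0:ℝ) A, ENNReal.ofReal (A ^ (-M) * t ^ (q' - 1))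
        = ENNReal.ofReal (A ^ (q' - M) / q') := by
      have hint : IntegrableOn (fun t : ℝ => A ^ (-M) * t ^ (q' - 1)) (Ioc 0 A) := by
        apply Integrable.const_mul
        exact (intervalIntegrable_iff_integrableOn_Ioc_of_le hA.le).1
          (intervalIntegral.intervalIntegrable_rpow' (by linarith))
      rw [← ofReal_integral_eq_lintegral_ofReal hint]
      · congr 1
        rw [integral_const_mul, ← intervalIntegral.integral_of_le hA.le,
          integral_rpow (Or.inl (by linarith))]
        rw [sub_add_cancel, Real.zero_rpow (ne_of_gt h1), Real.rpow_sub hA, Real.rpow_neg hA.le]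
        field_simp
        exact sub_zero _
      · filter_upwards [ae_restrict_mem measurableSet_Ioc] with t ht
        exact mul_nonneg (Real.rpow_nonneg hA.le _) (Real.rpow_nonneg ht.1.le _)
    exact mono.trans_eq eq1
  have p2 : ∫⁻ t in Ioi A, ENNReal.ofReal (t ^ (q' - 1) / (A + t) ^ M)
      ≤ ENNReal.ofReal (A ^ (q' - M) / (M - q')) := by
    have mono : ∫⁻ t in Ioi A, ENNReal.ofReal (t ^ (q' - 1) / (A + t) ^ M)
        ≤ ∫⁻ t in Ioi A, ENNReal.ofReal (t ^ (q' - 1 - M)) := by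
      refine setLIntegral_mono (by fun_prop) ?_
      intro t ht
      apply ENNReal.ofReal_le_ofReal
      have ht0 : 0 < t := hA.trans ht
      have h2' : t ^ M ≤ (A + t) ^ M := Real.rpow_le_rpow ht0.le (by linarith) hM.le
      calc t ^ (q' - 1) / (A + t) ^ M ≤ t ^ (q' - 1) / t ^ M :=
            div_le_div_of_nonneg_left (Real.rpow_nonneg ht0.le _)
              (Real.rpow_pos_of_pos ht0 M) h2'
        _ = t ^ (q' - 1 - M) := (Real.rpow_sub ht0 _ _).symm
    have eq2 : ∫⁻ t in Ioi A, ENNReal.ofReal (t ^ (q' - 1 - M))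
        = ENNReal.ofReal (A ^ (q' - M) / (M - q')) := by
      rw [← ofReal_integral_eq_lintegral_ofReal (integrableOn_Ioi_rpow_of_lt (by linarith) hA)]
      · congr 1
        rw [integral_Ioi_rpow_of_lt (by linarith) hA]
        have h3 : q' - 1 - M + 1 = q' - M := by ring
        rw [h3, show M - q' = -(q' - M) by ring, div_neg, neg_div]
      · filter_upwards [ae_restrict_mem measurableSet_Ioi] with t ht
        exact Real.rpow_nonneg (hA.trans ht).le _
    exact mono.trans_eq eq2
  calc _ ≤ ENNReal.ofReal (A ^ (q' - M) / q') + ENNReal.ofReal (A ^ (q' - M) / (M - q')) :=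
        add_le_add p1 p2
    _ = ENNReal.ofReal ((1 / q' + 1 / (M - q')) * A ^ (q' - M)) := by
        rw [← ENNReal.ofReal_add (by positivity)
          (div_nonneg (Real.rpow_nonneg hA.le _) (by linarith))]
        congr 1
        field_simp

open Set Metric in
/-- `∫_Γ (s·t)^{q'}/(s+t+|x|)^{(n+2)q'} dz dt/t^{n+1} ≤ C · s^{q'}/(s+|x|)^{(n+1)q'}`. -/
theorem cone_integral_bound (n : ℕ) (q' : ℝ) (hq' : 1 < q') :
    ∃ C : ℝ, 0 < C ∧ ∀ (x : EuclideanSpace ℝ (Fin n)) (s : ℝ), 0 < s →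
      (∫ p in cone n, (s * p.2) ^ q' / (s + p.2 + ‖x‖) ^ (((n : ℝ) + 2) * q')
          ∂(coneMeasure n)) ≤
        C * s ^ q' / (s + ‖x‖) ^ (((n : ℝ) + 1) * q') := by
  classical
  set E := EuclideanSpace ℝ (Fin n)
  set B : ENNReal := volume (Metric.ball (0 : E) 1) with hB
  set V : ℝ := B.toReal with hVdef
  have hBfin : B ≠ ⊤ := measure_ball_lt_top.ne
  have hBpos : 0 < B := Metric.measure_ball_pos volume _ one_pos
  have hV : 0 < V := ENNReal.toReal_pos hBpos.ne' hBfin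
  have hq0 : 0 < q' := lt_trans one_pos hq'
  set M : ℝ := ((n : ℝ) + 2) * q' with hMdef
  have hn0 : (0:ℝ) ≤ (n:ℝ) := Nat.cast_nonneg n
  have hqM : q' < M := by nlinarith
  set C0 : ℝ := 1 / q' + 1 / (M - q') with hC0def
  have hC0 : 0 < C0 := by
    have hmq : 0 < M - q' := by linarith
    rw [hC0def]
    positivity
  refine ⟨V * C0, mul_pos hV hC0, ?_⟩
  intro x s hs
  set A : ℝ := s + ‖x‖ with hAdef
  have hxnn : 0 ≤ ‖x‖ := norm_nonneg x
  have hA : 0 < A := by positivity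
  have hcone : MeasurableSet (cone n) := measurableSet_lt (measurable_fst.norm) measurable_snd
  set f : E × ℝ → ℝ := fun p => (s * p.2) ^ q' / (s + p.2 + ‖x‖) ^ M with hfdef
  have hf_meas : Measurable f := by
    rw [hfdef]; fun_prop
  set D : E × ℝ → ENNReal := fun p => ENNReal.ofReal (p.2 ^ (-((n : ℝ) + 1))) with hDdef
  have hD_meas : Measurable D := by rw [hDdef]; fun_prop
  -- Step 1: rewrite the Bochner integral as a lower integral.
  have step1 : (∫ p in cone n, f p ∂(coneMeasure n))
      = (∫⁻ p in cone n, ENNReal.ofReal (f p) ∂(coneMeasure n)).toReal := by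
    apply integral_eq_lintegral_of_nonneg_ae
    · filter_upwards [ae_restrict_mem hcone] with p hp
      have hp2 : 0 < p.2 := lt_of_le_of_lt (norm_nonneg p.1) hp
      have : (0:ℝ) < s + p.2 + ‖x‖ := by positivity
      positivity
    · exact hf_meas.aestronglyMeasurable
  rw [show (∫ p in cone n, (s * p.2) ^ q' / (s + p.2 + ‖x‖) ^ (((n : ℝ) + 2) * q')
        ∂(coneMeasure n)) = ∫ p in cone n, f p ∂(coneMeasure n) from rfl, step1]
  -- Step 2: unfold the density.
  have step2 : (∫⁻ p in cone n, ENNReal.ofReal (f p) ∂(coneMeasure n))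
      = ∫⁻ p in cone n, D p * ENNReal.ofReal (f p) := by
    rw [show (coneMeasure n).restrict (cone n)
        = (volume.restrict (cone n)).withDensity D from restrict_withDensity hcone D]
    exact lintegral_withDensity_eq_lintegral_mul _ hD_meas hf_meas.ennreal_ofReal
  rw [step2]
  -- Step 3: Fubini.
  set g : E × ℝ → ENNReal := fun p => D p * ENNReal.ofReal (f p) with hgdef
  have hg_meas : Measurable g := hD_meas.mul hf_meas.ennreal_ofReal
  have step3 : (∫⁻ p in cone n, g p)
      = ∫⁻ t : ℝ, ∫⁻ z : E, (cone n).indicator g (z, t) := by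
    rw [← lintegral_indicator hcone, Measure.volume_eq_prod]
    exact lintegral_prod_symm _ (hg_meas.indicator hcone).aemeasurable
  rw [step3]
  -- Step 4: inner integral over z.
  have step4 : ∀ t : ℝ, (∫⁻ z : E, (cone n).indicator g (z, t))
      = g (0, t) * volume (Metric.ball (0 : E) t) := by
    intro t
    have hind : ∀ z : E, (cone n).indicator g (z, t)
        = (Metric.ball (0 : E) t).indicator (fun _ => g (0, t)) z := by
      intro z
      by_cases hz : ‖z‖ < t
      · rw [Set.indicator_of_mem (show (z,t) ∈ cone n from hz),
          Set.indicator_of_mem (mem_ball_zero_iff.2 hz)]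
      · rw [Set.indicator_of_notMem (show (z,t) ∉ cone n from hz),
          Set.indicator_of_notMem (fun h => hz (mem_ball_zero_iff.1 h))]
    simp_rw [hind]
    rw [lintegral_indicator measurableSet_ball, setLIntegral_const]
  simp_rw [step4]
  -- Step 5: restrict to positive t.
  have step5 : (∫⁻ t : ℝ, g (0, t) * volume (Metric.ball (0 : E) t))
      = ∫⁻ t in Ioi (0:ℝ), g (0, t) * volume (Metric.ball (0 : E) t) := by
    rw [← lintegral_indicator measurableSet_Ioi]
    congr 1
    funext t
    by_cases ht : t ∈ Ioi (0:ℝ)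
    · rw [Set.indicator_of_mem ht]
    · rw [Set.indicator_of_notMem ht,
        Metric.ball_eq_empty.2 (le_of_not_gt (by simpa using ht)), measure_empty, mul_zero]
  rw [step5]
  -- Step 6: simplify the integrand on `Ioi 0`.
  have step6 : (∫⁻ t in Ioi (0:ℝ), g (0, t) * volume (Metric.ball (0 : E) t))
      = (ENNReal.ofReal (s ^ q') * B) * ∫⁻ t in Ioi (0:ℝ),
          ENNReal.ofReal (t ^ (q' - 1) / (A + t) ^ M) := by
    rw [← lintegral_const_mul' _ _ (by finiteness)]
    apply setLIntegral_congr_fun measurableSet_Ioi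
    intro t ht
    have ht0 : (0:ℝ) < t := ht
    beta_reduce
    rw [ballVol n ht0]
    have hreal : t ^ (-((n : ℝ) + 1)) * ((s * t) ^ q' / (s + t + ‖x‖) ^ M) * t ^ (n : ℝ)
        = s ^ q' * (t ^ (q' - 1) / (A + t) ^ M) := by
      have hst : (s * t) ^ q' = s ^ q' * t ^ q' := Real.mul_rpow hs.le ht0.le
      have hts : t ^ (-((n : ℝ) + 1)) * t ^ (q' : ℝ) * t ^ (n : ℝ) = t ^ (q' - 1) := by
        rw [← Real.rpow_add ht0, ← Real.rpow_add ht0]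
        congr 1
        ring
      have hAx : s + t + ‖x‖ = A + t := by rw [hAdef]; ring
      rw [hst, hAx]
      rw [div_eq_mul_inv, div_eq_mul_inv, ← hts]
      ring
    calc g (0, t) * (ENNReal.ofReal (t ^ (n:ℝ)) * B)
        = (ENNReal.ofReal (t ^ (-((n : ℝ) + 1))) * ENNReal.ofReal ((s * t) ^ q' / (s + t + ‖x‖) ^ M)
            * ENNReal.ofReal (t ^ (n:ℝ))) * B := by
          simp only [hgdef, hDdef, hfdef]
          ring
      _ = ENNReal.ofReal (t ^ (-((n : ℝ) + 1)) * ((s * t) ^ q' / (s + t + ‖x‖) ^ M) * t ^ (n:ℝ))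
            * B := by
          have ha : (0:ℝ) ≤ t ^ (-((n : ℝ) + 1)) := Real.rpow_nonneg ht0.le _
          have hb : (0:ℝ) ≤ (s * t) ^ q' / (s + t + ‖x‖) ^ M := by
            have h1 : (0:ℝ) ≤ s * t := by positivity
            have h2 : (0:ℝ) < s + t + ‖x‖ := by positivity
            positivity
          rw [← ENNReal.ofReal_mul ha, ← ENNReal.ofReal_mul (mul_nonneg ha hb)]
      _ = ENNReal.ofReal (s ^ q' * (t ^ (q' - 1) / (A + t) ^ M)) * B := by rw [hreal]
      _ = ENNReal.ofReal (s ^ q') * B * ENNReal.ofReal (t ^ (q' - 1) / (A + t) ^ M) := by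
          rw [ENNReal.ofReal_mul (Real.rpow_nonneg hs.le _)]
          ring
  rw [step6]
  -- Step 7: apply the 1-d key estimate and take `toReal`.
  have hkey := keyOneDim q' M A hq0 hqM hA
  have hbound : (ENNReal.ofReal (s ^ q') * B) * (∫⁻ t in Ioi (0:ℝ),
        ENNReal.ofReal (t ^ (q' - 1) / (A + t) ^ M))
      ≤ (ENNReal.ofReal (s ^ q') * B) * ENNReal.ofReal (C0 * A ^ (q' - M)) :=
    mul_le_mul_right hkey _
  have hfin : (ENNReal.ofReal (s ^ q') * B) * ENNReal.ofReal (C0 * A ^ (q' - M)) ≠ ⊤ := by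
    finiteness
  refine (ENNReal.toReal_mono hfin hbound).trans ?_
  rw [ENNReal.toReal_mul, ENNReal.toReal_mul, ENNReal.toReal_ofReal (Real.rpow_nonneg hs.le _),
    ENNReal.toReal_ofReal (by positivity)]
  have hAK : A ^ (q' - M) = (A ^ (((n : ℝ) + 1) * q'))⁻¹ := by
    rw [← Real.rpow_neg hA.le]
    congr 1
    rw [hMdef]; ring
  rw [hAK]
  rw [hAdef]
  rw [div_eq_mul_inv]
  ring_nf
  exact le_of_eq (by rw [hVdef]; ring)
end

section
/- Let a₁,...,a_N be elements of a Banach space B, 1 < q < ∞, and f(z) = Σ_k a_k z^{2^k} for z in the unit disc D. Then ∫_D (1−|z|)^{q−1} ‖f(z)‖^q dA(z) ≥ c Σ_k 2^{−qk} ‖a_k‖^q for a universal constant c > 0 (depending only on q). -/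
open MeasureTheory

open Set Complex Real in
/-- Orthogonality of exponentials on `(-π, π)`. -/
private lemma lac_integral_exp (m : ℤ) :
    ∫ θ in Ioo (-π) π, Complex.exp ((m : ℂ) * Complex.I * θ) =
      if m = 0 then ((2 * π : ℝ) : ℂ) else 0 := by
  rcases eq_or_ne m (0 : ℤ) with hm | hm
  · subst hm
    simp only [Int.cast_zero, zero_mul, Complex.exp_zero, if_true]
    rw [setIntegral_const]
    rw [measureReal_def, Real.volume_Ioo]
    rw [ENNReal.toReal_ofReal (by linarith [Real.pi_pos])]
    rw [Complex.real_smul, mul_one]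
    push_cast
    ring
  · rw [if_neg hm]
    rw [← integral_Ioc_eq_integral_Ioo,
      ← intervalIntegral.integral_of_le (by linarith [Real.pi_pos] : -π ≤ π)]
    have hc : (m : ℂ) * Complex.I ≠ 0 :=
      mul_ne_zero (Int.cast_ne_zero.mpr hm) Complex.I_ne_zero
    rw [integral_exp_mul_complex hc]
    have h1 : Complex.exp ((m : ℂ) * Complex.I * (π : ℝ)) =
        Complex.exp ((m : ℂ) * Complex.I * ((-π : ℝ) : ℂ)) := by
      rw [show (m : ℂ) * Complex.I * ((π : ℝ) : ℂ) =
          (m : ℂ) * Complex.I * ((-π : ℝ) : ℂ) + (m : ℂ) * (2 * (π : ℝ) * Complex.I) by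
        push_cast; ring]
      rw [Complex.exp_add, Complex.exp_int_mul_two_pi_mul_I, mul_one]
    rw [h1, sub_self, zero_div]

open Set Real in
private lemma lac_quarter (k : ℕ) (hk : 1 ≤ k) :
    (1 / 4 : ℝ) ≤ (1 - (1 / 2 : ℝ) ^ k) ^ (2 ^ k) := by
  induction k with
  | zero => omega
  | succ n ih =>
    rcases Nat.lt_or_ge 1 (n + 1) with h | h
    · have hn : 1 ≤ n := by omega
      have hx : (1 / 2 : ℝ) ^ n = 2 * (1 / 2 : ℝ) ^ (n + 1) := by
        rw [pow_succ]; ring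
      have h0 : (0 : ℝ) ≤ 1 - (1 / 2 : ℝ) ^ n := by
        have : (1 / 2 : ℝ) ^ n ≤ 1 := by
          apply pow_le_one₀ <;> norm_num
        linarith
      have h1 : (1 - (1 / 2 : ℝ) ^ n) ≤ (1 - (1 / 2 : ℝ) ^ (n + 1)) ^ 2 := by
        nlinarith [sq_nonneg ((1 / 2 : ℝ) ^ (n + 1))]
      calc (1 / 4 : ℝ) ≤ (1 - (1 / 2 : ℝ) ^ n) ^ (2 ^ n) := ih hn
        _ ≤ ((1 - (1 / 2 : ℝ) ^ (n + 1)) ^ 2) ^ (2 ^ n) := pow_le_pow_left₀ h0 h1 _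
        _ = (1 - (1 / 2 : ℝ) ^ (n + 1)) ^ (2 ^ (n + 1)) := by
          rw [← pow_mul, ← pow_succ']
    · have hn0 : n = 0 := by omega
      subst hn0
      norm_num

private lemma lac_im_pow (k : ℕ) : ((2 : ℂ) ^ k).im = 0 := by
  induction k with
  | zero => simp
  | succ n ih => rw [pow_succ, Complex.mul_im, ih]; simp

open Set Real in
private lemma lac_circle (B : Type) [NormedAddCommGroup B] [NormedSpace ℂ B] [CompleteSpace B]
    (N : ℕ) (a : ℕ → B) (k : ℕ) (hk : k ∈ Finset.Icc 1 N) {r : ℝ} (hr : 0 ≤ r) :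
    2 * π * r ^ (2 ^ k) * ‖a k‖ ≤
      ∫ θ in Ioo (-π) π,
        ‖∑ j ∈ Finset.Icc 1 N, ((r : ℂ) * Complex.exp (θ * Complex.I)) ^ (2 ^ j) • a j‖ := by
  set F : ℝ → B :=
    fun θ => ∑ j ∈ Finset.Icc 1 N, ((r : ℂ) * Complex.exp (θ * Complex.I)) ^ (2 ^ j) • a j
    with hF
  have hFc : Continuous F := by fun_prop
  set e : ℝ → ℂ := fun θ => Complex.exp (-(((2 ^ k : ℕ) : ℂ) * Complex.I * θ)) with he
  have hterm : ∀ (j : ℕ) (θ : ℝ), e θ * ((r : ℂ) * Complex.exp (θ * Complex.I)) ^ (2 ^ j)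
      = ((r ^ (2 ^ j) : ℝ) : ℂ) *
        Complex.exp ((((2 ^ j : ℤ) - (2 ^ k : ℤ) : ℤ) : ℂ) * Complex.I * θ) := by
    intro j θ
    rw [he, mul_pow, ← Complex.exp_nat_mul, mul_left_comm, ← Complex.exp_add]
    congr 1
    · push_cast; ring
    · push_cast; ring
  have hv : (∫ θ in Ioo (-π) π, e θ • F θ) = ((2 * π * r ^ (2 ^ k) : ℝ) : ℂ) • a k := by
    have h1 : (∫ θ in Ioo (-π) π, e θ • F θ) =
        ∫ θ in Ioo (-π) π, ∑ j ∈ Finset.Icc 1 N,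
          (((r ^ (2 ^ j) : ℝ) : ℂ) *
            Complex.exp ((((2 ^ j : ℤ) - (2 ^ k : ℤ) : ℤ) : ℂ) * Complex.I * θ)) • a j := by
      apply setIntegral_congr_fun measurableSet_Ioo
      intro θ _
      simp only [hF, Finset.smul_sum, smul_smul]
      exact Finset.sum_congr rfl fun j _ => by rw [hterm]
    rw [h1, integral_finset_sum]
    · have h2 : ∀ j ∈ Finset.Icc 1 N,
          (∫ θ in Ioo (-π) π,
            (((r ^ (2 ^ j) : ℝ) : ℂ) *
              Complex.exp ((((2 ^ j : ℤ) - (2 ^ k : ℤ) : ℤ) : ℂ) * Complex.I * θ)) • a j)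
          = (((r ^ (2 ^ j) : ℝ) : ℂ) *
              (if ((2 ^ j : ℤ) - (2 ^ k : ℤ) : ℤ) = 0 then ((2 * π : ℝ) : ℂ) else 0)) • a j := by
        intro j _
        rw [integral_smul_const, integral_const_mul, lac_integral_exp]
      rw [Finset.sum_congr rfl h2]
      rw [Finset.sum_eq_single k]
      · rw [if_pos (sub_self _)]
        congr 1
        push_cast
        ring
      · intro j hj hjk
        rw [if_neg, mul_zero, zero_smul]
        intro h0
        apply hjk
        have h2jk : (2 : ℤ) ^ j = 2 ^ k := by linarith [sub_eq_zero.mp h0]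
        have h2jk' : (2 : ℕ) ^ j = 2 ^ k := by exact_mod_cast h2jk
        exact Nat.pow_right_injective le_rfl h2jk'
      · intro hknot; exact absurd hk hknot
    · intro j _
      apply Continuous.integrableOn_Icc (a := -π) (b := π) (by fun_prop) |>.mono_set
        Ioo_subset_Icc_self
  have hnn : (0 : ℝ) ≤ 2 * π * r ^ (2 ^ k) :=
    mul_nonneg (by positivity) (pow_nonneg hr _)
  have hnorm : ‖((2 * π * r ^ (2 ^ k) : ℝ) : ℂ) • a k‖ = 2 * π * r ^ (2 ^ k) * ‖a k‖ := by
    rw [norm_smul, Complex.norm_real, Real.norm_eq_abs, abs_of_nonneg hnn]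
  have hle := norm_integral_le_integral_norm (μ := volume.restrict (Ioo (-π) π))
    (fun θ => e θ • F θ)
  rw [hv, hnorm] at hle
  refine hle.trans (le_of_eq ?_)
  apply setIntegral_congr_fun measurableSet_Ioo
  intro θ _
  show ‖e θ • F θ‖ = _
  rw [norm_smul]
  have h1 : ‖e θ‖ = 1 := by
    rw [he]
    show ‖Complex.exp (-(((2 ^ k : ℕ) : ℂ) * Complex.I * θ))‖ = 1
    rw [Complex.norm_exp]
    norm_num [Complex.mul_re]
    exact Or.inl (lac_im_pow k)
  rw [h1, one_mul]

open Set Real in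
private lemma lac_circle_q (q : ℝ) (hq : 1 < q)
    (B : Type) [NormedAddCommGroup B] [NormedSpace ℂ B] [CompleteSpace B]
    (N : ℕ) (a : ℕ → B) (k : ℕ) (hk : k ∈ Finset.Icc 1 N) {r : ℝ} (hr : 0 ≤ r) (hr1 : r ≤ 1) :
    2 * π * (r ^ (2 ^ k)) ^ q * ‖a k‖ ^ q ≤
      ∫ θ in Ioo (-π) π,
        ‖∑ j ∈ Finset.Icc 1 N, ((r : ℂ) * Complex.exp (θ * Complex.I)) ^ (2 ^ j) • a j‖ ^ q := by
  have hq0 : (0 : ℝ) < q := by linarith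
  have h2pi : (0 : ℝ) < 2 * π := by positivity
  set μ : Measure ℝ := volume.restrict (Ioo (-π) π) with hμ
  haveI : IsFiniteMeasure μ := by
    constructor
    rw [hμ, Measure.restrict_apply_univ, Real.volume_Ioo]
    exact ENNReal.ofReal_lt_top
  set F : ℝ → B :=
    fun θ => ∑ j ∈ Finset.Icc 1 N, ((r : ℂ) * Complex.exp (θ * Complex.I)) ^ (2 ^ j) • a j
    with hF
  have hFc : Continuous F := by fun_prop
  have hFbdd : ∀ θ, ‖F θ‖ ≤ ∑ j ∈ Finset.Icc 1 N, ‖a j‖ := by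
    intro θ
    refine (norm_sum_le _ _).trans (Finset.sum_le_sum fun j _ => ?_)
    rw [norm_smul, norm_pow, norm_mul, Complex.norm_real, Real.norm_eq_abs, abs_of_nonneg hr]
    have h1 : ‖Complex.exp ((θ : ℂ) * Complex.I)‖ = 1 := by
      rw [Complex.norm_exp]
      norm_num [Complex.mul_re]
    rw [h1, mul_one]
    have h2 : r ^ 2 ^ j ≤ 1 := pow_le_one₀ hr hr1
    nlinarith [norm_nonneg (a j), pow_nonneg hr (2 ^ j)]
  have hFmem : MemLp F (ENNReal.ofReal q) μ :=
    MemLp.of_bound hFc.aestronglyMeasurable _ (Filter.Eventually.of_forall hFbdd)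
  have hpq : (q.conjExponent).HolderConjugate q := (Real.HolderConjugate.conjExponent hq).symm
  have h2 := integral_mul_le_Lp_mul_Lq_of_nonneg (μ := μ) hpq
    (f := fun _ : ℝ => (1 : ℝ)) (g := fun θ => ‖F θ‖)
    (Filter.Eventually.of_forall fun _ => zero_le_one)
    (Filter.Eventually.of_forall fun θ => norm_nonneg _)
    (memLp_const 1) hFmem.norm
  simp only [one_mul, Real.one_rpow] at h2
  have hμuniv : ∫ _ : ℝ, (1 : ℝ) ∂μ = 2 * π := by
    rw [integral_const, smul_eq_mul, mul_one, hμ, measureReal_restrict_apply_univ, measureReal_def, Real.volume_Ioo,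
      ENNReal.toReal_ofReal (by linarith [Real.pi_pos])]
    ring
  rw [hμuniv] at h2
  set J : ℝ := ∫ θ, ‖F θ‖ ^ q ∂μ with hJ
  have hJ0 : 0 ≤ J := integral_nonneg fun θ => Real.rpow_nonneg (norm_nonneg _) q
  have h1 := lac_circle B N a k hk hr
  have hkey : (2 * π) ^ (1 / q) * (r ^ (2 ^ k) * ‖a k‖) ≤ J ^ (1 / q) := by
    refine le_of_mul_le_mul_left ?_ (Real.rpow_pos_of_pos h2pi (1 / q.conjExponent))
    have hmul : (2 * π) ^ (1 / q.conjExponent) * ((2 * π) ^ (1 / q) * (r ^ (2 ^ k) * ‖a k‖))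
        = 2 * π * r ^ (2 ^ k) * ‖a k‖ := by
      rw [← mul_assoc, ← Real.rpow_add h2pi,
        show 1 / q.conjExponent + 1 / q = 1 by
          rw [one_div, one_div, hpq.inv_add_inv_eq_one],
        Real.rpow_one]
      ring
    rw [hmul]
    exact le_trans (le_trans h1 h2) le_rfl
  have hfin := Real.rpow_le_rpow
    (mul_nonneg (Real.rpow_nonneg h2pi.le _) (mul_nonneg (pow_nonneg hr _) (norm_nonneg _)))
    hkey hq0.le
  have e1 : ((2 * π) ^ (1 / q) * (r ^ (2 ^ k) * ‖a k‖)) ^ q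
      = 2 * π * (r ^ (2 ^ k)) ^ q * ‖a k‖ ^ q := by
    rw [Real.mul_rpow (Real.rpow_nonneg h2pi.le _)
        (mul_nonneg (pow_nonneg hr _) (norm_nonneg _)),
      Real.mul_rpow (pow_nonneg hr _) (norm_nonneg _),
      ← Real.rpow_mul h2pi.le, one_div, inv_mul_cancel₀ (ne_of_gt hq0), Real.rpow_one]
    ring
  have e2 : (J ^ (1 / q)) ^ q = J := by
    rw [← Real.rpow_mul hJ0, one_div, inv_mul_cancel₀ (ne_of_gt hq0), Real.rpow_one]
  rw [e1, e2] at hfin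
  exact hfin

open Real in
private lemma lac_const_eq (q : ℝ) (hq : 1 < q) (k : ℕ) (x : ℝ) :
    π * (8 : ℝ) ^ (-q) * ((2 : ℝ) ^ (-(q * (k : ℝ))) * x) =
      (1 / 2 : ℝ) ^ (k + 1) *
        ((1 / 2) * (((1 / 2 : ℝ) ^ (k + 1)) ^ (q - 1)) * (2 * π * ((1 / 4 : ℝ)) ^ q * x)) := by
  have h8 : (8 : ℝ) ^ (-q) = ((1 / 8 : ℝ)) ^ q := by
    rw [Real.rpow_neg (by norm_num), ← Real.inv_rpow (by norm_num)]
    norm_num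
  have h2k : (2 : ℝ) ^ (-(q * (k : ℝ))) = ((1 / 2 : ℝ) ^ k) ^ q := by
    rw [show -(q * (k : ℝ)) = (k : ℝ) * (-q) by ring, Real.rpow_mul (by norm_num),
      Real.rpow_natCast, Real.rpow_neg (by positivity), ← Real.inv_rpow (by positivity)]
    congr 1
    rw [← inv_pow]
    norm_num
  have hsplit : ((1 / 2 : ℝ) ^ (k + 1)) ^ (q - 1) * (1 / 2 : ℝ) ^ (k + 1)
      = ((1 / 2 : ℝ) ^ (k + 1)) ^ q := by
    rw [← Real.rpow_add_one (by positivity) (q - 1), sub_add_cancel]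
  have hprod : ((1 / 8 : ℝ)) ^ q * ((1 / 2 : ℝ) ^ k) ^ q
      = (((1 / 2 : ℝ) ^ (k + 1)) ^ q) * ((1 / 4 : ℝ)) ^ q := by
    rw [← Real.mul_rpow (by norm_num) (by positivity), ← Real.mul_rpow (by positivity) (by norm_num)]
    congr 1
    rw [pow_succ]
    ring
  calc π * (8 : ℝ) ^ (-q) * ((2 : ℝ) ^ (-(q * (k : ℝ))) * x)
      = ((1 / 8 : ℝ)) ^ q * ((1 / 2 : ℝ) ^ k) ^ q * (π * x) := by rw [h8, h2k]; ring
    _ = (((1 / 2 : ℝ) ^ (k + 1)) ^ q) * ((1 / 4 : ℝ)) ^ q * (π * x) := by rw [hprod]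
    _ = ((1 / 2 : ℝ) ^ (k + 1)) ^ (q - 1) * (1 / 2 : ℝ) ^ (k + 1) * ((1 / 4 : ℝ)) ^ q * (π * x) := by
        rw [hsplit]
    _ = _ := by ring

open Set Real in
private theorem lac_key (q : ℝ) (hq : 1 < q) :
    ∃ c : ℝ, 0 < c ∧
      ∀ (B : Type) [NormedAddCommGroup B] [NormedSpace ℂ B] [CompleteSpace B] (N : ℕ) (a : ℕ → B),
        c * ∑ k ∈ Finset.Icc 1 N, (2 : ℝ) ^ (-(q * k)) * ‖a k‖ ^ q ≤
          ∫ z in Metric.ball (0 : ℂ) 1,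
            (1 - ‖z‖) ^ (q - 1) * ‖∑ k ∈ Finset.Icc 1 N, z ^ (2 ^ k) • a k‖ ^ q := by
  have hq0 : (0 : ℝ) < q := by linarith
  have hq1 : (0 : ℝ) < q - 1 := by linarith
  refine ⟨π * (8 : ℝ) ^ (-q), by positivity, ?_⟩
  intro B _ _ _ N a
  set f : ℂ → B := fun z => ∑ j ∈ Finset.Icc 1 N, z ^ (2 ^ j) • a j with hf
  set g : ℂ → ℝ := fun z => (1 - ‖z‖) ^ (q - 1) * ‖f z‖ ^ q with hg
  set G : ℝ × ℝ → ℝ := fun p => p.1 * g (Complex.polarCoord.symm p) with hG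
  have hP : ∀ p : ℝ × ℝ, Complex.polarCoord.symm p = (p.1 : ℂ) * Complex.exp (p.2 * Complex.I) := by
    intro p
    rw [Complex.polarCoord_symm_apply, Complex.exp_mul_I, Complex.ofReal_cos, Complex.ofReal_sin]
  have hrpow1 : Continuous fun x : ℝ => x ^ (q - 1) := by
    rw [continuous_iff_continuousAt]
    exact fun x => Real.continuousAt_rpow_const x _ (Or.inr hq1.le)
  have hrpow2 : Continuous fun x : ℝ => x ^ q := by
    rw [continuous_iff_continuousAt]
    exact fun x => Real.continuousAt_rpow_const x _ (Or.inr hq0.le)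
  have hfc : Continuous f := by fun_prop
  have hgc : Continuous g := by
    apply Continuous.mul
    · exact hrpow1.comp (continuous_const.sub continuous_norm)
    · exact hrpow2.comp hfc.norm
  have hGc : Continuous G := by
    apply continuous_fst.mul
    apply hgc.comp
    have : (⇑Complex.polarCoord.symm : ℝ × ℝ → ℂ)
        = fun p => (p.1 : ℂ) * Complex.exp (p.2 * Complex.I) := funext hP
    rw [this]
    fun_prop
  -- polar coordinates
  have hball : (∫ z in Metric.ball (0 : ℂ) 1, g z)
      = ∫ p in Set.Ioo (0 : ℝ) 1 ×ˢ Set.Ioo (-π) π, G p := by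
    rw [← integral_indicator measurableSet_ball,
      ← Complex.integral_comp_polarCoord_symm (Set.indicator (Metric.ball 0 1) g),
      show polarCoord.target = Set.Ioi (0 : ℝ) ×ˢ Set.Ioo (-π) π from rfl]
    have h2 : Set.EqOn (fun p : ℝ × ℝ => p.1 • Set.indicator (Metric.ball (0 : ℂ) 1) g
        (Complex.polarCoord.symm p))
        (Set.indicator ((Set.Ioo (0 : ℝ) 1) ×ˢ Set.Ioo (-π) π) G)
        (Set.Ioi (0 : ℝ) ×ˢ Set.Ioo (-π) π) := by
      rintro ⟨r, θ⟩ hp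
      obtain ⟨hr, hθ⟩ := hp
      have habs : ‖Complex.polarCoord.symm (r, θ)‖ = r := by
        rw [Complex.norm_polarCoord_symm]
        exact abs_of_pos hr
      by_cases h : r < 1
      · have hm1 : Complex.polarCoord.symm (r, θ) ∈ Metric.ball (0 : ℂ) 1 := by
          rw [mem_ball_zero_iff, habs]; exact h
        have hm2 : (r, θ) ∈ (Set.Ioo (0 : ℝ) 1) ×ˢ Set.Ioo (-π) π := ⟨⟨hr, h⟩, hθ⟩
        show r • (Metric.ball (0 : ℂ) 1).indicator g (Complex.polarCoord.symm (r, θ)) = _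
        rw [Set.indicator_of_mem hm1, Set.indicator_of_mem hm2]
        rfl
      · have hm1 : Complex.polarCoord.symm (r, θ) ∉ Metric.ball (0 : ℂ) 1 := by
          rw [mem_ball_zero_iff, habs]; exact h
        have hm2 : (r, θ) ∉ (Set.Ioo (0 : ℝ) 1) ×ˢ Set.Ioo (-π) π := by
          rintro ⟨⟨_, h1⟩, _⟩; exact h h1
        show r • (Metric.ball (0 : ℂ) 1).indicator g (Complex.polarCoord.symm (r, θ)) = _
        rw [Set.indicator_of_notMem hm1, Set.indicator_of_notMem hm2, smul_zero]
    rw [setIntegral_congr_fun (measurableSet_Ioi.prod measurableSet_Ioo) h2,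
      setIntegral_indicator ((measurableSet_Ioo.prod measurableSet_Ioo))]
    congr 1
    rw [Set.prod_inter_prod, Set.inter_self,
      Set.inter_eq_right.mpr Set.Ioo_subset_Ioi_self]
  -- integrability on the big compact square
  have hK : IntegrableOn G (Set.Icc (0 : ℝ) 1 ×ˢ Set.Icc (-π) π) :=
    hGc.continuousOn.integrableOn_compact (isCompact_Icc.prod isCompact_Icc)
  -- annuli
  set I : ℕ → Set ℝ := fun k => Set.Ico (1 - (1 / 2 : ℝ) ^ k) (1 - (1 / 2 : ℝ) ^ (k + 1)) with hI
  have hIsub : ∀ k : ℕ, 1 ≤ k → I k ⊆ Set.Ioo (0 : ℝ) 1 := by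
    intro k hk x hx
    obtain ⟨hx1, hx2⟩ := hx
    have h1 : (1 / 2 : ℝ) ^ k ≤ (1 / 2 : ℝ) ^ 1 :=
      pow_le_pow_of_le_one (by norm_num) (by norm_num) hk
    have h2 : (0 : ℝ) < (1 / 2 : ℝ) ^ (k + 1) := by positivity
    constructor
    · norm_num at h1; linarith
    · linarith
  have hSsub : ∀ k : ℕ, 1 ≤ k →
      I k ×ˢ Set.Ioo (-π) π ⊆ Set.Ioo (0 : ℝ) 1 ×ˢ Set.Ioo (-π) π :=
    fun k hk => Set.prod_mono (hIsub k hk) subset_rfl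
  have hSint : IntegrableOn G (Set.Ioo (0 : ℝ) 1 ×ˢ Set.Ioo (-π) π) :=
    hK.mono_set (Set.prod_mono Set.Ioo_subset_Icc_self Set.Ioo_subset_Icc_self)
  have hSkint : ∀ k : ℕ, 1 ≤ k → IntegrableOn G (I k ×ˢ Set.Ioo (-π) π) := fun k hk =>
    hSint.mono_set (hSsub k hk)
  have hGnonneg : ∀ p ∈ Set.Ioo (0 : ℝ) 1 ×ˢ Set.Ioo (-π) π, 0 ≤ G p := by
    rintro ⟨r, θ⟩ hp
    obtain ⟨⟨hr0, hr1⟩, _⟩ := hp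
    have habs : ‖Complex.polarCoord.symm (r, θ)‖ = r := by
      rw [Complex.norm_polarCoord_symm]; exact abs_of_pos hr0
    have : (0:ℝ) ≤ g (Complex.polarCoord.symm (r, θ)) := by
      rw [hg]
      apply mul_nonneg
      · apply Real.rpow_nonneg
        rw [habs]; linarith
      · exact Real.rpow_nonneg (norm_nonneg _) q
    exact mul_nonneg hr0.le this
  -- the per-annulus estimate
  have hkey : ∀ k ∈ Finset.Icc 1 N,
      π * (8 : ℝ) ^ (-q) * ((2 : ℝ) ^ (-(q * (k : ℝ))) * ‖a k‖ ^ q) ≤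
        ∫ p in I k ×ˢ Set.Ioo (-π) π, G p := by
    intro k hk
    obtain ⟨hk1, hkN⟩ := Finset.mem_Icc.mp hk
    have hIk := hSkint k hk1
    -- Fubini
    have fub : (∫ p in I k ×ˢ Set.Ioo (-π) π, G p)
        = ∫ r in I k, ∫ θ in Set.Ioo (-π) π, G (r, θ) := by
      rw [Measure.volume_eq_prod] at hIk ⊢
      exact setIntegral_prod G hIk
    have hmarg : IntegrableOn (fun r => ∫ θ in Set.Ioo (-π) π, G (r, θ)) (I k) := by
      have h : Integrable G
          (((volume : Measure ℝ).restrict (I k)).prod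
            ((volume : Measure ℝ).restrict (Set.Ioo (-π) π))) := by
        rw [Measure.prod_restrict]
        exact hIk
      exact h.integral_prod_left
    -- pointwise bound for the inner integral
    set Ck : ℝ := (1 / 2) * (((1 / 2 : ℝ) ^ (k + 1)) ^ (q - 1)) *
      (2 * π * ((1 / 4 : ℝ)) ^ q * ‖a k‖ ^ q) with hCk
    have hpt : ∀ r ∈ I k, Ck ≤ ∫ θ in Set.Ioo (-π) π, G (r, θ) := by
      intro r hr
      obtain ⟨hrl, hru⟩ := hr
      have hhalf : (1 / 2 : ℝ) ^ k ≤ 1 / 2 := by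
        have := pow_le_pow_of_le_one (by norm_num : (0:ℝ) ≤ 1/2) (by norm_num) hk1
        norm_num at this
        linarith
      have hr0 : (0 : ℝ) < r := by linarith
      have hr1 : r < 1 := by
        have : (0 : ℝ) < (1 / 2 : ℝ) ^ (k + 1) := by positivity
        linarith
      have hin : (∫ θ in Set.Ioo (-π) π, G (r, θ))
          = (r * (1 - r) ^ (q - 1)) *
            ∫ θ in Set.Ioo (-π) π,
              ‖∑ j ∈ Finset.Icc 1 N, ((r : ℂ) * Complex.exp (θ * Complex.I)) ^ (2 ^ j) • a j‖ ^ q := by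
        rw [← integral_const_mul]
        apply setIntegral_congr_fun measurableSet_Ioo
        intro θ _
        show G (r, θ) = _
        rw [hG]
        simp only
        rw [hg]
        simp only
        have habs : ‖Complex.polarCoord.symm (r, θ)‖ = r := by
          rw [Complex.norm_polarCoord_symm]; exact abs_of_pos hr0
        rw [habs, hf]
        simp only
        rw [hP (r, θ)]
        ring
      rw [hin]
      have hcirc := lac_circle_q q hq B N a k hk hr0.le hr1.le
      have hquarter : (1 / 4 : ℝ) ≤ r ^ 2 ^ k := by
        refine le_trans (lac_quarter k hk1) ?_
        exact pow_le_pow_left₀ (by linarith) hrl _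
      have h14 : ((1 / 4 : ℝ)) ^ q ≤ (r ^ 2 ^ k) ^ q :=
        Real.rpow_le_rpow (by norm_num) hquarter hq0.le
      have h1r : (((1 / 2 : ℝ) ^ (k + 1))) ^ (q - 1) ≤ (1 - r) ^ (q - 1) :=
        Real.rpow_le_rpow (by positivity) (by linarith) (by linarith)
      have hJnn : (0 : ℝ) ≤ ∫ θ in Set.Ioo (-π) π,
          ‖∑ j ∈ Finset.Icc 1 N, ((r : ℂ) * Complex.exp (θ * Complex.I)) ^ (2 ^ j) • a j‖ ^ q :=
        integral_nonneg fun θ => Real.rpow_nonneg (norm_nonneg _) q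
      have hJlow : 2 * π * ((1 / 4 : ℝ)) ^ q * ‖a k‖ ^ q ≤ ∫ θ in Set.Ioo (-π) π,
          ‖∑ j ∈ Finset.Icc 1 N, ((r : ℂ) * Complex.exp (θ * Complex.I)) ^ (2 ^ j) • a j‖ ^ q := by
        refine le_trans ?_ hcirc
        have hmm := mul_le_mul_of_nonneg_right h14
          (Real.rpow_nonneg (norm_nonneg (a k)) q)
        have h2pinn : (0:ℝ) ≤ 2 * π := by positivity
        calc 2 * π * ((1 / 4 : ℝ)) ^ q * ‖a k‖ ^ q
            = 2 * π * (((1 / 4 : ℝ)) ^ q * ‖a k‖ ^ q) := by ring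
          _ ≤ 2 * π * ((r ^ 2 ^ k) ^ q * ‖a k‖ ^ q) := mul_le_mul_of_nonneg_left hmm h2pinn
          _ = 2 * π * (r ^ 2 ^ k) ^ q * ‖a k‖ ^ q := by ring
      rw [hCk]
      have hc1 : (1 / 2 : ℝ) * (((1 / 2 : ℝ) ^ (k + 1)) ^ (q - 1)) ≤ r * (1 - r) ^ (q - 1) := by
        apply mul_le_mul (by linarith) h1r (by positivity) (by linarith)
      apply mul_le_mul hc1 hJlow (by positivity) ?_
      exact mul_nonneg hr0.le (Real.rpow_nonneg (by linarith) _)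
    -- integrate the constant bound over the annulus
    have hwidth : (volume (I k)).toReal = (1 / 2 : ℝ) ^ (k + 1) := by
      rw [hI]
      simp only
      rw [Real.volume_Ico, ENNReal.toReal_ofReal (by rw [pow_succ]; nlinarith [pow_pos (show (0:ℝ) < 1/2 by norm_num) k])]
      rw [pow_succ]
      ring
    have hconst : (∫ _ in I k, Ck) = (1 / 2 : ℝ) ^ (k + 1) * Ck := by
      rw [setIntegral_const, measureReal_def, hwidth, smul_eq_mul]
    have hmono : (∫ _ in I k, Ck) ≤ ∫ r in I k, ∫ θ in Set.Ioo (-π) π, G (r, θ) := by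
      apply setIntegral_mono_on
      · exact integrableOn_const (by rw [Real.volume_Ico]; exact ENNReal.ofReal_ne_top)
      · exact hmarg
      · exact measurableSet_Ico
      · exact hpt
    rw [fub]
    calc π * (8 : ℝ) ^ (-q) * ((2 : ℝ) ^ (-(q * (k : ℝ))) * ‖a k‖ ^ q)
        = (1 / 2 : ℝ) ^ (k + 1) * Ck := by rw [hCk]; exact lac_const_eq q hq k _
      _ = ∫ _ in I k, Ck := hconst.symm
      _ ≤ _ := hmono
  -- assemble
  have hdisj : (↑(Finset.Icc 1 N) : Set ℕ).Pairwise
      (Function.onFun Disjoint fun k => I k ×ˢ Set.Ioo (-π) π) := by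
    have key2 : ∀ {i j : ℕ}, i < j → Disjoint (I i) (I j) := by
      intro i j hij
      rw [Set.disjoint_left]
      intro x hxi hxj
      have h1 : (1 / 2 : ℝ) ^ j ≤ (1 / 2 : ℝ) ^ (i + 1) :=
        pow_le_pow_of_le_one (by norm_num) (by norm_num) hij
      have h2 := hxi.2
      have h3 := hxj.1
      have h2' : x < 1 - (1 / 2 : ℝ) ^ (i + 1) := h2
      have h3' : 1 - (1 / 2 : ℝ) ^ j ≤ x := h3
      linarith
    intro i _ j _ hij
    have : Disjoint (I i) (I j) := by
      rcases lt_or_gt_of_ne hij with h | h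
      · exact key2 h
      · exact (key2 h).symm
    exact Set.disjoint_prod.mpr (Or.inl this)
  have hsum : ∑ k ∈ Finset.Icc 1 N, ∫ p in I k ×ˢ Set.Ioo (-π) π, G p
      ≤ ∫ p in Set.Ioo (0 : ℝ) 1 ×ˢ Set.Ioo (-π) π, G p := by
    rw [← integral_biUnion_finset (Finset.Icc 1 N)
      (fun k _ => (measurableSet_Ico.prod measurableSet_Ioo)) hdisj
      (fun k hk => hSkint k (Finset.mem_Icc.mp hk).1)]
    apply setIntegral_mono_set hSint
    · exact ae_restrict_of_forall_mem (measurableSet_Ioo.prod measurableSet_Ioo) hGnonneg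
    · apply HasSubset.Subset.eventuallyLE
      exact Set.iUnion₂_subset fun k hk => hSsub k (Finset.mem_Icc.mp hk).1
  calc π * (8 : ℝ) ^ (-q) * ∑ k ∈ Finset.Icc 1 N, (2 : ℝ) ^ (-(q * k)) * ‖a k‖ ^ q
      = ∑ k ∈ Finset.Icc 1 N,
          π * (8 : ℝ) ^ (-q) * ((2 : ℝ) ^ (-(q * (k : ℝ))) * ‖a k‖ ^ q) := by
        rw [Finset.mul_sum]
    _ ≤ ∑ k ∈ Finset.Icc 1 N, ∫ p in I k ×ˢ Set.Ioo (-π) π, G p :=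
        Finset.sum_le_sum hkey
    _ ≤ ∫ p in Set.Ioo (0 : ℝ) 1 ×ˢ Set.Ioo (-π) π, G p := hsum
    _ = ∫ z in Metric.ball (0 : ℂ) 1, g z := hball.symm
    _ = _ := by rw [hg, hf]

/-- For `f(z) = Σ_{k=1}^N a_k z^{2^k}` with coefficients in a Banach space `B`,
`∫_D (1−|z|)^{q−1} ‖f(z)‖^q dA(z) ≥ c Σ_k 2^{−qk} ‖a_k‖^q` with `c = c(q) > 0`. -/
theorem lacunary_lower_estimate (q : ℝ) (hq : 1 < q) :
    ∃ c : ℝ, 0 < c ∧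
      ∀ (B : Type) [NormedAddCommGroup B] [NormedSpace ℂ B] (N : ℕ) (a : ℕ → B),
        c * ∑ k ∈ Finset.Icc 1 N, (2 : ℝ) ^ (-(q * k)) * ‖a k‖ ^ q ≤
          ∫ z in Metric.ball (0 : ℂ) 1,
            (1 - ‖z‖) ^ (q - 1) * ‖∑ k ∈ Finset.Icc 1 N, z ^ (2 ^ k) • a k‖ ^ q := by
  obtain ⟨c, hc, hmain⟩ := lac_key q hq
  refine ⟨c, hc, ?_⟩
  intro B _ _ N a
  have h := hmain (UniformSpace.Completion B) N (fun k => (a k : UniformSpace.Completion B))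
  have hcoe : ∀ (z : ℂ) (s : Finset ℕ),
      ((∑ k ∈ s, z ^ (2 ^ k) • a k : B) : UniformSpace.Completion B)
        = ∑ k ∈ s, z ^ (2 ^ k) • (a k : UniformSpace.Completion B) := by
    intro z s
    induction s using Finset.cons_induction with
    | empty => simp [UniformSpace.Completion.coe_zero]
    | cons i s hi ih =>
        rw [Finset.sum_cons, Finset.sum_cons, UniformSpace.Completion.coe_add,
          UniformSpace.Completion.coe_smul, ih]
  have hnorm : ∀ z : ℂ,
      ‖∑ k ∈ Finset.Icc 1 N, z ^ (2 ^ k) • ((a k : UniformSpace.Completion B))‖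
        = ‖∑ k ∈ Finset.Icc 1 N, z ^ (2 ^ k) • a k‖ := by
    intro z
    rw [← hcoe z, UniformSpace.Completion.norm_coe]
  calc c * ∑ k ∈ Finset.Icc 1 N, (2 : ℝ) ^ (-(q * k)) * ‖a k‖ ^ q
      = c * ∑ k ∈ Finset.Icc 1 N, (2 : ℝ) ^ (-(q * k)) *
          ‖(a k : UniformSpace.Completion B)‖ ^ q := by
        simp [UniformSpace.Completion.norm_coe]
    _ ≤ ∫ z in Metric.ball (0 : ℂ) 1, (1 - ‖z‖) ^ (q - 1) *
          ‖∑ k ∈ Finset.Icc 1 N, z ^ (2 ^ k) • (a k : UniformSpace.Completion B)‖ ^ q := h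
    _ = _ := by simp only [hnorm]
end

section
/- Let a₁,...,a_N be elements of a Banach space B, 1 < q < ∞, and f(z) = Σ_k a_k z^{2^k}. Then there is a constant C depending only on q such that sup_{z₀∈D} ∫_D (1−|z|)^{q−1} ‖f(z)‖^q P_{z₀}(z) dA(z) ≤ C Σ_k 2^{−qk} ‖a_k‖^q, where P_{z₀}(z) = (1−|z₀|²)/|1−conj(z₀)z|². -/
open MeasureTheory

/-- The Poisson-type weight `P_{z₀}(z) = (1−|z₀|²)/|1−conj(z₀)z|²`, extended to `z ∈ D`. -/
noncomputable def poissonWeight (z₀ z : ℂ) : ℝ :=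
  (1 - ‖z₀‖ ^ 2) / ‖1 - (starRingEnd ℂ) z₀ * z‖ ^ 2

open Set

noncomputable def Hfun (q x : ℝ) : ℝ := (1 + x ^ (2*q - 2)) * Real.exp (-x)

noncomputable def Phi (q : ℝ) (k : ℕ) (t : ℝ) : ℝ :=
  t ^ (q-1) * max ((2:ℝ)^k * t) (((2:ℝ)^k * t)⁻¹) ^ (q-1) * Real.exp (-(q * ((2:ℝ)^k * t)))

lemma Phi_nonneg (q : ℝ) (k : ℕ) {t : ℝ} (ht : 0 ≤ t) : 0 ≤ Phi q k t := by
  have hx : (0:ℝ) ≤ (2:ℝ)^k * t := by positivity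
  refine mul_nonneg (mul_nonneg (Real.rpow_nonneg ht _) (Real.rpow_nonneg ?_ _)) (Real.exp_pos _).le
  exact le_trans hx (le_max_left _ _)

lemma Phi_measurable (q : ℝ) (k : ℕ) : Measurable (Phi q k) := by
  unfold Phi
  fun_prop

lemma Hfun_measurable (q : ℝ) : Measurable (Hfun q) := by
  unfold Hfun; fun_prop

lemma Hfun_nonneg (q : ℝ) {x : ℝ} (hx : 0 ≤ x) : 0 ≤ Hfun q x := by
  have := Real.rpow_nonneg hx (2*q-2)
  unfold Hfun
  positivity

lemma Phi_le {q : ℝ} (hq : 1 < q) (k : ℕ) {t : ℝ} (ht : 0 < t) (ht1 : t ≤ 1) :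
    Phi q k t ≤ ((2:ℝ)^k)^(-(q-1)) * Hfun q ((2:ℝ)^k * t) := by
  have h2k : (0:ℝ) < (2:ℝ)^k := by positivity
  set x : ℝ := (2:ℝ)^k * t with hxdef
  have hx : 0 < x := by positivity
  have ht2 : t = ((2:ℝ)^k)⁻¹ * x := by rw [hxdef]; field_simp
  have h1 : t ^ (q-1) = ((2:ℝ)^k)^(-(q-1)) * x^(q-1) := by
    rw [ht2, Real.mul_rpow (by positivity) hx.le, Real.inv_rpow h2k.le, ← Real.rpow_neg h2k.le]
  have key : x^(q-1) * max x x⁻¹ ^ (q-1) * Real.exp (-(q*x)) ≤ Hfun q x := by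
    have he : Real.exp (-(q*x)) ≤ Real.exp (-x) := by
      apply Real.exp_le_exp.2; nlinarith
    have hm : x^(q-1) * max x x⁻¹ ^ (q-1) ≤ 1 + x^(2*q-2) := by
      rcases le_total x 1 with h | h
      · have hmax : max x x⁻¹ = x⁻¹ :=
          max_eq_right (le_trans h (one_le_inv_iff₀.2 ⟨hx, h⟩))
        rw [hmax, ← Real.mul_rpow hx.le (by positivity), mul_inv_cancel₀ hx.ne',
          Real.one_rpow]
        have := Real.rpow_nonneg hx.le (2*q-2); linarith
      · have hmax : max x x⁻¹ = x := max_eq_left (le_trans (inv_le_one_of_one_le₀ h) h)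
        rw [hmax, ← Real.rpow_add hx]
        have : q - 1 + (q-1) = 2*q-2 := by ring
        rw [this]
        have : (0:ℝ) ≤ x ^ (2*q-2) := Real.rpow_nonneg hx.le _
        linarith
    calc x^(q-1) * max x x⁻¹ ^ (q-1) * Real.exp (-(q*x))
        ≤ (1 + x^(2*q-2)) * Real.exp (-x) := by
          apply mul_le_mul hm he (Real.exp_pos _).le
          have h1 : (0:ℝ) ≤ x ^ (2*q-2) := Real.rpow_nonneg hx.le _
          linarith
      _ = Hfun q x := rfl
  calc Phi q k t = ((2:ℝ)^k)^(-(q-1)) * (x^(q-1) * max x x⁻¹ ^ (q-1) * Real.exp (-(q*x))) := by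
        unfold Phi; rw [h1]; ring
    _ ≤ ((2:ℝ)^k)^(-(q-1)) * Hfun q x :=
        mul_le_mul_of_nonneg_left key (Real.rpow_nonneg h2k.le _)

lemma Hfun_integrableOn {q : ℝ} (hq : 1 < q) : IntegrableOn (Hfun q) (Ioi (0:ℝ)) := by
  have h1 : IntegrableOn (fun x : ℝ => Real.exp (-x)) (Ioi (0:ℝ)) := by
    have := exp_neg_integrableOn_Ioi (0:ℝ) (b := 1) one_pos
    simpa using this
  have h2 : IntegrableOn (fun x : ℝ => x^(2*q-2) * Real.exp (-x)) (Ioi (0:ℝ)) := by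
    have h := Real.GammaIntegral_convergent (s := 2*q-1) (by linarith)
    have : (2*q-1-1) = 2*q-2 := by ring
    rw [this] at h
    exact h.congr_fun (fun x _ => mul_comm _ _) measurableSet_Ioi
  have hsum : IntegrableOn (fun x : ℝ => Real.exp (-x) + x^(2*q-2) * Real.exp (-x)) (Ioi (0:ℝ)) :=
    h1.add h2
  exact hsum.congr_fun (fun x _ => by unfold Hfun; ring) measurableSet_Ioi

lemma phi_int_bound {q : ℝ} (hq : 1 < q) (k : ℕ) :
    ∫ t in Ioo (0:ℝ) 1, Phi q k t ≤ (∫ x in Ioi (0:ℝ), Hfun q x) * (2:ℝ)^(-(q*k)) := by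
  have h2k : (0:ℝ) < (2:ℝ)^k := by positivity
  have hCq : 0 ≤ ∫ x in Ioi (0:ℝ), Hfun q x :=
    setIntegral_nonneg measurableSet_Ioi fun x hx => Hfun_nonneg q (le_of_lt hx)
  -- integrability of the majorant on Ioo 0 1
  have hmaj : IntegrableOn (fun t => ((2:ℝ)^k)^(-(q-1)) * Hfun q ((2:ℝ)^k * t)) (Ioo (0:ℝ) 1) := by
    apply Measure.integrableOn_of_bounded (M := ((2:ℝ)^k)^(-(q-1)) * ((1 + ((2:ℝ)^k)^(2*q-2)) * 1))
    · simp [Real.volume_Ioo]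
    · exact (measurable_const.mul ((Hfun_measurable q).comp (measurable_const.mul measurable_id))).aestronglyMeasurable
    · filter_upwards [ae_restrict_mem measurableSet_Ioo] with t ht
      have hx : (0:ℝ) < (2:ℝ)^k * t := by have := ht.1; positivity
      have hb : Hfun q ((2:ℝ)^k * t) ≤ (1 + ((2:ℝ)^k)^(2*q-2)) * 1 := by
        unfold Hfun
        have hA : 1 + ((2:ℝ)^k * t)^(2*q-2) ≤ 1 + ((2:ℝ)^k)^(2*q-2) := by
          have : ((2:ℝ)^k * t)^(2*q-2) ≤ ((2:ℝ)^k)^(2*q-2) :=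
            Real.rpow_le_rpow hx.le (by nlinarith [ht.2]) (by linarith)
          linarith
        have hB : Real.exp (-((2:ℝ)^k * t)) ≤ 1 := Real.exp_le_one_iff.2 (by linarith)
        have hD : (0:ℝ) ≤ 1 + ((2:ℝ)^k)^(2*q-2) := by
          have := Real.rpow_nonneg h2k.le (2*q-2); linarith
        exact mul_le_mul hA hB (Real.exp_pos _).le hD
      rw [Real.norm_eq_abs, abs_of_nonneg (mul_nonneg (Real.rpow_nonneg h2k.le _) (Hfun_nonneg q hx.le))]
      exact mul_le_mul_of_nonneg_left hb (Real.rpow_nonneg h2k.le _)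
  have step1 : ∫ t in Ioo (0:ℝ) 1, Phi q k t
      ≤ ∫ t in Ioo (0:ℝ) 1, ((2:ℝ)^k)^(-(q-1)) * Hfun q ((2:ℝ)^k * t) := by
    apply integral_mono_of_nonneg _ hmaj
    · filter_upwards [ae_restrict_mem measurableSet_Ioo] with t ht
      exact Phi_le hq k ht.1 ht.2.le
    · filter_upwards [ae_restrict_mem measurableSet_Ioo] with t ht
      exact Phi_nonneg q k ht.1.le
  have step2 : ∫ t in Ioo (0:ℝ) 1, ((2:ℝ)^k)^(-(q-1)) * Hfun q ((2:ℝ)^k * t)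
      = ((2:ℝ)^k)^(-(q-1)) * ∫ t in Ioo (0:ℝ) 1, Hfun q ((2:ℝ)^k * t) := integral_const_mul _ _
  have step3 : ∫ t in Ioo (0:ℝ) 1, Hfun q ((2:ℝ)^k * t) ≤ ((2:ℝ)^k)⁻¹ * ∫ x in Ioi (0:ℝ), Hfun q x := by
    have e1 : ∫ t in Ioo (0:ℝ) 1, Hfun q ((2:ℝ)^k * t) = ∫ t in (0:ℝ)..1, Hfun q ((2:ℝ)^k * t) := by
      rw [intervalIntegral.integral_of_le zero_le_one, integral_Ioc_eq_integral_Ioo]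
    have e2 : (∫ t in (0:ℝ)..1, Hfun q ((2:ℝ)^k * t)) = ((2:ℝ)^k)⁻¹ • ∫ x in (0:ℝ)..((2:ℝ)^k), Hfun q x := by
      rw [intervalIntegral.integral_comp_mul_left (Hfun q) h2k.ne']
      norm_num
    have e3 : (∫ x in (0:ℝ)..((2:ℝ)^k), Hfun q x) ≤ ∫ x in Ioi (0:ℝ), Hfun q x := by
      rw [intervalIntegral.integral_of_le h2k.le, integral_Ioc_eq_integral_Ioo]
      apply setIntegral_mono_set (Hfun_integrableOn hq)
      · filter_upwards [ae_restrict_mem measurableSet_Ioi] with x hx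
        exact Hfun_nonneg q (le_of_lt hx)
      · exact HasSubset.Subset.eventuallyLE (fun x hx => hx.1)
    rw [e1, e2, smul_eq_mul]
    exact mul_le_mul_of_nonneg_left e3 (by positivity)
  have final : ((2:ℝ)^k)^(-(q-1)) * (((2:ℝ)^k)⁻¹ * ∫ x in Ioi (0:ℝ), Hfun q x)
      = (∫ x in Ioi (0:ℝ), Hfun q x) * (2:ℝ)^(-(q*k)) := by
    rw [← Real.rpow_natCast 2 k, ← Real.rpow_neg (by norm_num : (0:ℝ) ≤ 2),
      ← Real.rpow_mul (by norm_num : (0:ℝ) ≤ 2), ← mul_assoc,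
      ← Real.rpow_add (by norm_num : (0:ℝ) < 2), mul_comm]
    congr 1
    ring
  calc ∫ t in Ioo (0:ℝ) 1, Phi q k t
      ≤ ((2:ℝ)^k)^(-(q-1)) * ∫ t in Ioo (0:ℝ) 1, Hfun q ((2:ℝ)^k * t) := by rw [← step2]; exact step1
    _ ≤ ((2:ℝ)^k)^(-(q-1)) * (((2:ℝ)^k)⁻¹ * ∫ x in Ioi (0:ℝ), Hfun q x) :=
        mul_le_mul_of_nonneg_left step3 (Real.rpow_nonneg h2k.le _)
    _ = _ := final

lemma one_sub_cos_ge {ψ : ℝ} (h1 : -Real.pi ≤ ψ) (h2 : ψ ≤ Real.pi) :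
    2/Real.pi^2 * ψ^2 ≤ 1 - Real.cos ψ := by
  have hπ := Real.pi_pos
  have hcos : 1 - Real.cos ψ = 2 * Real.sin (ψ/2)^2 := by
    have h := Real.sin_sq_eq_half_sub (ψ/2)
    rw [show 2*(ψ/2) = ψ by ring] at h
    linarith
  have habs : |ψ|/2 ≤ Real.pi/2 := by
    have := abs_le.2 ⟨h1, h2⟩; linarith
  have h0 : (0:ℝ) ≤ |ψ|/2 := by positivity
  have hsin : 2/Real.pi * (|ψ|/2) ≤ Real.sin (|ψ|/2) := Real.mul_le_sin h0 habs
  have hsq : (2/Real.pi * (|ψ|/2))^2 ≤ Real.sin (|ψ|/2)^2 :=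
    pow_le_pow_left₀ (by positivity) hsin 2
  have heq : Real.sin (|ψ|/2)^2 = Real.sin (ψ/2)^2 := by
    cases abs_cases ψ with
    | inl h => rw [h.1]
    | inr h => rw [h.1, show -ψ/2 = -(ψ/2) by ring, Real.sin_neg]; ring
  have hval : (2/Real.pi * (|ψ|/2))^2 = ψ^2/Real.pi^2 := by
    rw [show 2/Real.pi * (|ψ|/2) = |ψ|/Real.pi by ring, div_pow, sq_abs]
  have e : 2/Real.pi^2*ψ^2 = 2*(ψ^2/Real.pi^2) := by ring
  rw [e, hcos]
  rw [hval, heq] at hsq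
  linarith

lemma arctan_integral_bound {a c : ℝ} (ha : 0 < a) (hc : 0 < c) :
    (∫ ψ in (-Real.pi)..Real.pi, (a^2 + c*ψ^2)⁻¹) ≤ Real.pi / (a * Real.sqrt c) := by
  have hπ := Real.pi_pos
  set s := Real.sqrt c with hs
  have hs0 : 0 < s := Real.sqrt_pos.2 hc
  have hk : 0 < s / a := by positivity
  have heq : ∀ ψ : ℝ, (a^2 + c*ψ^2)⁻¹ = (a^2)⁻¹ * (1 + ((s/a) * ψ)^2)⁻¹ := by
    intro ψ
    have hcs : s^2 = c := Real.sq_sqrt hc.le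
    rw [← hcs]
    field_simp
  have e1 : (∫ ψ in (-Real.pi)..Real.pi, (a^2 + c*ψ^2)⁻¹)
      = (a^2)⁻¹ * ∫ ψ in (-Real.pi)..Real.pi, (1 + ((s/a) * ψ)^2)⁻¹ := by
    simp_rw [heq]
    rw [intervalIntegral.integral_const_mul]
  have e2 : (∫ ψ in (-Real.pi)..Real.pi, (1 + ((s/a) * ψ)^2)⁻¹)
      = (s/a)⁻¹ • ∫ x in ((s/a) * -Real.pi)..((s/a) * Real.pi), (1 + x^2)⁻¹ := by
    rw [← intervalIntegral.integral_comp_mul_left (fun x => (1 + x^2)⁻¹) hk.ne']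
  have e3 : (∫ x in ((s/a) * -Real.pi)..((s/a) * Real.pi), ((1:ℝ) + x^2)⁻¹)
      = Real.arctan ((s/a) * Real.pi) - Real.arctan ((s/a) * -Real.pi) := integral_inv_one_add_sq
  have e4 : Real.arctan ((s/a) * Real.pi) - Real.arctan ((s/a) * -Real.pi) ≤ Real.pi := by
    have l1 := Real.arctan_lt_pi_div_two ((s/a) * Real.pi)
    have l2 := Real.neg_pi_div_two_lt_arctan ((s/a) * -Real.pi)
    linarith
  rw [e1, e2, e3, smul_eq_mul]
  have : (a^2)⁻¹ * ((s/a)⁻¹ * (Real.arctan ((s/a) * Real.pi) - Real.arctan ((s/a) * -Real.pi)))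
      ≤ (a^2)⁻¹ * ((s/a)⁻¹ * Real.pi) := by
    apply mul_le_mul_of_nonneg_left (mul_le_mul_of_nonneg_left e4 (by positivity)) (by positivity)
  refine this.trans (le_of_eq ?_)
  field_simp

lemma dyadic_min_sum_le (N : ℕ) {t : ℝ} (ht : 0 < t) (ht1 : t ≤ 1) :
    ∑ k ∈ Finset.Icc 1 N, min ((2:ℝ)^k * t) (((2:ℝ)^k * t)⁻¹) ≤ 4 := by
  have hinv : 1 ≤ 1/t := by rw [le_div_iff₀ ht]; linarith
  set m : ℕ := ⌊1/t⌋₊ with hm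
  have hm1 : 1 ≤ m := Nat.le_floor (by exact_mod_cast hinv)
  set k₀ : ℕ := Nat.log 2 m with hk₀
  have hlow : (2:ℝ)^k₀ ≤ 1/t := by
    have h := Nat.pow_log_le_self 2 (by omega : m ≠ 0)
    calc (2:ℝ)^k₀ = ((2^k₀ : ℕ) : ℝ) := by push_cast; ring
      _ ≤ (m:ℝ) := by exact_mod_cast h
      _ ≤ 1/t := Nat.floor_le (by positivity)
  have hhigh : 1/t < (2:ℝ)^(k₀+1) := by
    have h := Nat.lt_pow_succ_log_self (by norm_num : 1 < 2) m
    calc 1/t < (m:ℝ) + 1 := Nat.lt_floor_add_one _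
      _ ≤ (2:ℝ)^(k₀+1) := by
          have : m + 1 ≤ 2^(k₀+1) := h
          calc (m:ℝ) + 1 = ((m+1 : ℕ):ℝ) := by push_cast; ring
            _ ≤ ((2^(k₀+1) : ℕ):ℝ) := by exact_mod_cast this
            _ = (2:ℝ)^(k₀+1) := by push_cast; ring
  have hsplit : ∑ k ∈ Finset.Icc 1 N, min ((2:ℝ)^k * t) (((2:ℝ)^k * t)⁻¹)
      ≤ (∑ k ∈ (Finset.Icc 1 N).filter (· ≤ k₀), (2:ℝ)^k * t)
        + ∑ k ∈ (Finset.Icc 1 N).filter (fun k => ¬ k ≤ k₀), ((2:ℝ)^k * t)⁻¹ := by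
    rw [← Finset.sum_filter_add_sum_filter_not (Finset.Icc 1 N) (· ≤ k₀)]
    gcongr with k hk k hk
    · exact min_le_left _ _
    · exact min_le_right _ _
  have hsum1 : (∑ k ∈ (Finset.Icc 1 N).filter (· ≤ k₀), (2:ℝ)^k * t) ≤ 2 := by
    have hsub : (Finset.Icc 1 N).filter (· ≤ k₀) ⊆ Finset.range (k₀+1) := by
      intro k hk
      simp only [Finset.mem_filter] at hk
      exact Finset.mem_range.2 (by omega)
    calc (∑ k ∈ (Finset.Icc 1 N).filter (· ≤ k₀), (2:ℝ)^k * t)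
        ≤ ∑ k ∈ Finset.range (k₀+1), (2:ℝ)^k * t := by
          apply Finset.sum_le_sum_of_subset_of_nonneg hsub
          intro k _ _; positivity
      _ = (∑ k ∈ Finset.range (k₀+1), (2:ℝ)^k) * t := by rw [Finset.sum_mul]
      _ = ((2:ℝ)^(k₀+1) - 1) * t := by rw [geom_sum_eq (by norm_num)]; norm_num
      _ ≤ (2:ℝ)^(k₀+1) * t := by nlinarith
      _ = 2 * ((2:ℝ)^k₀ * t) := by ring
      _ ≤ 2 * 1 := by
          have : (2:ℝ)^k₀ * t ≤ 1 := by
            rw [← le_div_iff₀ ht] at *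
            simpa [one_div] using hlow
          linarith
      _ = 2 := by norm_num
  have hsum2 : (∑ k ∈ (Finset.Icc 1 N).filter (fun k => ¬ k ≤ k₀), ((2:ℝ)^k * t)⁻¹) ≤ 2 := by
    have hsub : (Finset.Icc 1 N).filter (fun k => ¬ k ≤ k₀) ⊆ Finset.Icc (k₀+1) N := by
      intro k hk
      simp only [Finset.mem_filter, Finset.mem_Icc] at hk ⊢
      omega
    have hterm : ∀ k, ((2:ℝ)^k * t)⁻¹ = (1/t) * (1/2)^k := by
      intro k; rw [mul_inv, one_div, one_div, inv_pow]; ring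
    calc (∑ k ∈ (Finset.Icc 1 N).filter (fun k => ¬ k ≤ k₀), ((2:ℝ)^k * t)⁻¹)
        ≤ ∑ k ∈ Finset.Icc (k₀+1) N, ((2:ℝ)^k * t)⁻¹ := by
          apply Finset.sum_le_sum_of_subset_of_nonneg hsub
          intro k _ _; positivity
      _ = (1/t) * ∑ k ∈ Finset.Icc (k₀+1) N, ((1:ℝ)/2)^k := by
          rw [Finset.mul_sum]; exact Finset.sum_congr rfl fun k _ => hterm k
      _ ≤ (1/t) * (((1:ℝ)/2)^(k₀+1) * 2) := by
          apply mul_le_mul_of_nonneg_left _ (by positivity)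
          rw [← Finset.Ico_add_one_right_eq_Icc]
          have h := geom_sum_Ico_le_of_lt_one (by norm_num : (0:ℝ) ≤ 1/2)
            (by norm_num : (1:ℝ)/2 < 1) (m := k₀+1) (n := N+1)
          calc (∑ i ∈ Finset.Ico (k₀+1) (N+1), ((1:ℝ)/2)^i)
              ≤ ((1:ℝ)/2)^(k₀+1) / (1 - 1/2) := h
            _ = ((1:ℝ)/2)^(k₀+1) * 2 := by rw [div_eq_mul_inv]; norm_num
      _ ≤ 2 := by
          have h1 : ((1:ℝ)/2)^(k₀+1) = ((2:ℝ)^(k₀+1))⁻¹ := by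
            rw [one_div, inv_pow]
          rw [h1]
          have h2 : (1/t) * ((2:ℝ)^(k₀+1))⁻¹ ≤ 1 := by
            rw [mul_inv_le_iff₀ (by positivity)]
            linarith
          linarith
  linarith

lemma weighted_jensen {q : ℝ} (hq : 1 < q) (s : Finset ℕ) (v X : ℕ → ℝ)
    (hv : ∀ k ∈ s, 0 < v k) (hX : ∀ k ∈ s, 0 ≤ X k) :
    (∑ k ∈ s, X k) ^ q ≤ (∑ k ∈ s, v k) ^ (q-1) * ∑ k ∈ s, X k ^ q * v k ^ (1-q) := by
  rcases s.eq_empty_or_nonempty with rfl | hne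
  · simp [Real.zero_rpow (by linarith : q ≠ 0)]
  have hV : 0 < ∑ k ∈ s, v k := Finset.sum_pos hv hne
  set V := ∑ k ∈ s, v k with hVdef
  have happ := Real.rpow_arith_mean_le_arith_mean_rpow s (fun k => v k / V)
    (fun k => X k * V / v k)
    (fun k hk => div_nonneg (hv k hk).le hV.le)
    (by rw [← Finset.sum_div, ← hVdef, div_self hV.ne'])
    (fun k hk => by
      have := hv k hk; have := hX k hk; positivity)
    hq.le
  have hL : ∀ k ∈ s, (fun k => v k / V) k * (fun k => X k * V / v k) k = X k := by
    intro k hk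
    have h1 := (hv k hk).ne'
    field_simp
  have hR : ∀ k ∈ s, (fun k => v k / V) k * ((fun k => X k * V / v k) k) ^ q
      = V^(q-1) * (X k ^ q * v k ^ (1-q)) := by
    intro k hk
    have hvk := hv k hk
    have hXk := hX k hk
    simp only
    have e1 : X k * V / v k = X k * (V / v k) := by ring
    rw [e1, Real.mul_rpow hXk (by positivity), Real.div_rpow hV.le hvk.le,
      Real.rpow_sub hV, Real.rpow_sub hvk, Real.rpow_one, Real.rpow_one]
    have h2 : v k ^ q ≠ 0 := (Real.rpow_pos_of_pos hvk q).ne'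
    field_simp
  calc (∑ k ∈ s, X k)^q = (∑ k ∈ s, (fun k => v k / V) k * (fun k => X k * V / v k) k)^q := by
        rw [Finset.sum_congr rfl hL]
    _ ≤ ∑ k ∈ s, (fun k => v k / V) k * ((fun k => X k * V / v k) k) ^ q := happ
    _ = ∑ k ∈ s, V^(q-1) * (X k ^ q * v k ^ (1-q)) := Finset.sum_congr rfl hR
    _ = V^(q-1) * ∑ k ∈ s, X k ^ q * v k ^ (1-q) := (Finset.mul_sum _ _ _).symm

lemma poissonWeight_nonneg {z₀ : ℂ} (hz₀ : ‖z₀‖ < 1) (z : ℂ) : 0 ≤ poissonWeight z₀ z := by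
  unfold poissonWeight
  apply div_nonneg _ (by positivity)
  nlinarith [norm_nonneg z₀]

set_option maxHeartbeats 1000000 in
lemma angular_bound {z₀ : ℂ} (hz₀ : ‖z₀‖ < 1) {r : ℝ} (hr0 : 0 < r) (hr1 : r < 1) :
    ∫ θ in Ioo (-Real.pi) Real.pi, poissonWeight z₀ (Complex.polarCoord.symm (r, θ))
      ≤ 16*Real.pi + 2*Real.pi^2 := by
  have hπ := Real.pi_pos
  have habs0 := norm_nonneg z₀
  set A : ℝ := 1 - ‖z₀‖ ^ 2 with hAdef
  set c : ℂ := (starRingEnd ℂ) z₀ * (r : ℂ) with hcdef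
  set ρ : ℝ := ‖c‖ with hρdef
  have hρ : ρ = ‖z₀‖ * r := by
    rw [hρdef, hcdef, norm_mul, Complex.norm_conj, Complex.norm_real, Real.norm_eq_abs, abs_of_pos hr0]
  have hρ0 : 0 ≤ ρ := norm_nonneg c
  have hρ1 : ρ < 1 := by
    rw [hρ]
    calc ‖z₀‖ * r ≤ ‖z₀‖ * 1 := by
          exact mul_le_mul_of_nonneg_left hr1.le habs0
      _ < 1 := by linarith
  set φ₀ : ℝ := Complex.arg c with hφ₀def
  set g : ℝ → ℝ := fun ψ => A / (1 - 2*ρ*Real.cos ψ + ρ^2) with hgdef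
  have hpos : ∀ ψ : ℝ, 0 < 1 - 2*ρ*Real.cos ψ + ρ^2 := by
    intro ψ
    nlinarith [Real.cos_le_one ψ, Real.neg_one_le_cos ψ]
  have hA0 : 0 ≤ A := by rw [hAdef]; nlinarith
  have hA1 : A ≤ 1 := by rw [hAdef]; nlinarith
  have hgc : Continuous g := continuous_const.div (by continuity) (fun ψ => (hpos ψ).ne')
  -- pointwise identification
  have hpw : ∀ θ : ℝ, poissonWeight z₀ (Complex.polarCoord.symm (r, θ)) = g (θ + φ₀) := by
    intro θ
    have hc : c = (ρ:ℂ) * (↑(Real.cos φ₀) + ↑(Real.sin φ₀) * Complex.I) := by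
      rw [hρdef, hφ₀def, Complex.ofReal_cos, Complex.ofReal_sin]
      exact (Complex.norm_mul_cos_add_sin_mul_I c).symm
    have hz : Complex.polarCoord.symm (r, θ) = (r:ℂ) * (↑(Real.cos θ) + ↑(Real.sin θ) * Complex.I) :=
      Complex.polarCoord_symm_apply _
    unfold poissonWeight
    rw [hz]
    have harg : (starRingEnd ℂ) z₀ * ((r:ℂ) * (↑(Real.cos θ) + ↑(Real.sin θ) * Complex.I))
        = c * (↑(Real.cos θ) + ↑(Real.sin θ) * Complex.I) := by rw [hcdef]; ring
    rw [harg, hc]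
    have hden : ‖1 - (ρ:ℂ) * (↑(Real.cos φ₀) + ↑(Real.sin φ₀) * Complex.I)
        * (↑(Real.cos θ) + ↑(Real.sin θ) * Complex.I)‖ ^ 2
        = 1 - 2*ρ*Real.cos (θ + φ₀) + ρ^2 := by
      rw [Complex.sq_norm, Complex.normSq_apply]
      simp only [Complex.sub_re, Complex.sub_im, Complex.one_re, Complex.one_im,
        Complex.mul_re, Complex.mul_im, Complex.add_re, Complex.add_im,
        Complex.ofReal_re, Complex.ofReal_im, Complex.I_re, Complex.I_im,
        Complex.mul_im]
      rw [Real.cos_add]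
      linear_combination (ρ^2 * (Real.cos θ^2 + Real.sin θ^2)) * Real.sin_sq_add_cos_sq φ₀
        + ρ^2 * Real.sin_sq_add_cos_sq θ
    rw [hden, hgdef]
  rw [funext hpw]  -- replace integrand
  have hshift : ∫ θ in Ioo (-Real.pi) Real.pi, g (θ + φ₀) = ∫ θ in (-Real.pi)..Real.pi, g (θ + φ₀) := by
    rw [intervalIntegral.integral_of_le (by linarith), integral_Ioc_eq_integral_Ioo]
  rw [hshift, intervalIntegral.integral_comp_add_right]
  have hper : Function.Periodic g (2*Real.pi) := by
    intro ψ; simp only [hgdef]; rw [Real.cos_add_two_pi]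
  have hb1 : Real.pi + φ₀ = (-Real.pi + φ₀) + 2*Real.pi := by ring
  have hb2 : (-Real.pi) + 2*Real.pi = Real.pi := by ring
  rw [hb1, hper.intervalIntegral_add_eq (-Real.pi + φ₀) (-Real.pi), hb2]
  rcases le_or_gt ρ (1/2) with hcase | hcase
  · have hg4 : ∀ ψ ∈ Icc (-Real.pi) Real.pi, g ψ ≤ 4 := by
      intro ψ _
      simp only [hgdef]
      rw [div_le_iff₀ (hpos ψ)]
      nlinarith [Real.cos_le_one ψ, sq_nonneg (1-2*ρ)]
    calc (∫ ψ in (-Real.pi)..Real.pi, g ψ) ≤ ∫ _ψ in (-Real.pi)..Real.pi, (4:ℝ) := by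
          apply intervalIntegral.integral_mono_on (by linarith) (hgc.intervalIntegrable _ _)
            intervalIntegrable_const hg4
      _ = 8*Real.pi := by simp [intervalIntegral.integral_const]; ring
      _ ≤ 16*Real.pi + 2*Real.pi^2 := by nlinarith
  · have hc2 : (0:ℝ) < 2/Real.pi^2 := by positivity
    have ha : (0:ℝ) < 1 - ρ := by linarith
    have hmaj : ∀ ψ ∈ Icc (-Real.pi) Real.pi, g ψ ≤ A * ((1-ρ)^2 + (2/Real.pi^2)*ψ^2)⁻¹ := by
      intro ψ hψ
      have hj := one_sub_cos_ge hψ.1 hψ.2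
      have hden : (1-ρ)^2 + (2/Real.pi^2)*ψ^2 ≤ 1 - 2*ρ*Real.cos ψ + ρ^2 := by
        have h1 : (0:ℝ) ≤ 1 - Real.cos ψ := by nlinarith [Real.cos_le_one ψ]
        have h2 : (0:ℝ) ≤ (2*ρ-1)*(1-Real.cos ψ) := mul_nonneg (by linarith) h1
        nlinarith [hj]
      simp only [hgdef]
      rw [← div_eq_mul_inv]
      exact div_le_div_of_nonneg_left hA0 (by positivity) hden
    have hint : IntervalIntegrable (fun ψ => A * ((1-ρ)^2 + (2/Real.pi^2)*ψ^2)⁻¹)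
        MeasureTheory.volume (-Real.pi) Real.pi := by
      apply Continuous.intervalIntegrable
      exact continuous_const.mul ((continuous_const.add
        (continuous_const.mul (continuous_pow 2))).inv₀ (fun ψ => ne_of_gt (by
          have h := pow_pos ha 2
          have h2 : (0:ℝ) ≤ (2/Real.pi^2)*ψ^2 := by positivity
          show (0:ℝ) < (1-ρ)^2 + (2/Real.pi^2)*ψ^2
          linarith)))
    calc (∫ ψ in (-Real.pi)..Real.pi, g ψ)
        ≤ ∫ ψ in (-Real.pi)..Real.pi, A * ((1-ρ)^2 + (2/Real.pi^2)*ψ^2)⁻¹ :=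
          intervalIntegral.integral_mono_on (by linarith) (hgc.intervalIntegrable _ _) hint hmaj
      _ = A * ∫ ψ in (-Real.pi)..Real.pi, ((1-ρ)^2 + (2/Real.pi^2)*ψ^2)⁻¹ :=
          intervalIntegral.integral_const_mul _ _
      _ ≤ A * (Real.pi / ((1-ρ) * Real.sqrt (2/Real.pi^2))) :=
          mul_le_mul_of_nonneg_left (arctan_integral_bound ha hc2) hA0
      _ ≤ 16*Real.pi + 2*Real.pi^2 := by
          have hs : Real.sqrt (2/Real.pi^2) = Real.sqrt 2 / Real.pi := by
            rw [show (2:ℝ)/Real.pi^2 = (Real.sqrt 2 / Real.pi)^2 by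
              rw [div_pow, Real.sq_sqrt (by norm_num : (0:ℝ) ≤ 2)]]
            exact Real.sqrt_sq (by positivity)
          rw [hs]
          have hs2 : (1:ℝ) ≤ Real.sqrt 2 := by
            nlinarith [Real.sq_sqrt (by norm_num : (0:ℝ) ≤ 2), Real.sqrt_nonneg 2]
          have hA2 : A ≤ 2*(1-ρ) := by
            rw [hAdef, hρ]
            nlinarith [sq_nonneg (1 - ‖z₀‖)]
          have e : Real.pi / ((1-ρ) * (Real.sqrt 2 / Real.pi)) = Real.pi^2 / ((1-ρ)*Real.sqrt 2) := by
            field_simp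
          rw [e]
          have h5 : A * (Real.pi^2/((1-ρ)*Real.sqrt 2)) ≤ 2*(1-ρ) * (Real.pi^2/((1-ρ)*Real.sqrt 2)) :=
            mul_le_mul_of_nonneg_right hA2 (by positivity)
          have e2 : 2*(1-ρ) * (Real.pi^2/((1-ρ)*Real.sqrt 2)) = 2*Real.pi^2/Real.sqrt 2 := by
            field_simp
          have e3 : 2*Real.pi^2/Real.sqrt 2 ≤ 2*Real.pi^2 := div_le_self (by positivity) hs2
          nlinarith

lemma poissonWeight_le {z₀ : ℂ} (hz₀ : ‖z₀‖ < 1) {z : ℂ} (hz : ‖z‖ ≤ 1) :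
    poissonWeight z₀ z ≤ (1 - ‖z₀‖ ^ 2) / (1 - ‖z₀‖)^2 := by
  have habs0 := norm_nonneg z₀
  have h1 : 1 - ‖z₀‖ ≤ ‖1 - (starRingEnd ℂ) z₀ * z‖ := by
    have h2 := norm_sub_norm_le (1:ℂ) ((starRingEnd ℂ) z₀ * z)
    simp only [norm_one, norm_mul, Complex.norm_conj] at h2
    have h3 : ‖z₀‖ * ‖z‖ ≤ ‖z₀‖ :=
      mul_le_of_le_one_right habs0 hz
    calc 1 - ‖z₀‖ ≤ 1 - ‖z₀‖ * ‖z‖ := by linarith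
      _ ≤ _ := by simpa using h2
  have h0 : 0 < 1 - ‖z₀‖ := by linarith
  unfold poissonWeight
  apply div_le_div_of_nonneg_left (by nlinarith) (by positivity)
  exact pow_le_pow_left₀ h0.le h1 2

set_option maxHeartbeats 1000000 in
lemma radial_poisson_bound (φ : ℝ → ℝ) (hφm : Measurable φ)
    (hφ0 : ∀ t ∈ Ioo (0:ℝ) 1, 0 ≤ φ t) {B : ℝ} (hφB : ∀ t ∈ Ioo (0:ℝ) 1, φ t ≤ B)
    {z₀ : ℂ} (hz₀ : ‖z₀‖ < 1) :
    ∫ z in Metric.ball (0:ℂ) 1, φ (1 - ‖z‖) * poissonWeight z₀ z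
      ≤ (16*Real.pi + 2*Real.pi^2) * ∫ t in Ioo (0:ℝ) 1, φ t := by
  have hπ := Real.pi_pos
  set K : ℝ := 16*Real.pi + 2*Real.pi^2 with hKdef
  have hK0 : 0 ≤ K := by positivity
  set Pb : ℝ := (1 - ‖z₀‖ ^ 2) / (1 - ‖z₀‖)^2 with hPbdef
  have hPb0 : 0 ≤ Pb := by
    have := norm_nonneg z₀
    apply div_nonneg (by nlinarith) (by positivity)
  have hPmeas : Measurable (poissonWeight z₀) := by
    unfold poissonWeight
    exact measurable_const.div
      (((continuous_norm.comp (continuous_const.sub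
        (continuous_const.mul continuous_id))).pow 2).measurable)
  have hsymm_cont : Continuous (fun p : ℝ×ℝ => (Complex.polarCoord.symm p : ℂ)) := by
    have heq : (fun p : ℝ×ℝ => (Complex.polarCoord.symm p : ℂ))
        = fun p => (p.1 : ℂ) * (↑(Real.cos p.2) + ↑(Real.sin p.2) * Complex.I) :=
      funext fun p => Complex.polarCoord_symm_apply p
    rw [heq]; continuity
  set F : ℂ → ℝ := fun z => φ (1 - ‖z‖) * poissonWeight z₀ z with hF
  set G : ℝ × ℝ → ℝ := fun p => p.1 * (φ (1 - p.1) * poissonWeight z₀ (Complex.polarCoord.symm p))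
    with hG
  have hGmeas : Measurable G := by
    apply measurable_fst.mul
    apply Measurable.mul
    · exact hφm.comp (measurable_const.sub measurable_fst)
    · exact hPmeas.comp hsymm_cont.measurable
  set s' : Set (ℝ×ℝ) := Ioo (0:ℝ) 1 ×ˢ Ioo (-Real.pi) Real.pi with hs'
  have hs'meas : MeasurableSet s' := measurableSet_Ioo.prod measurableSet_Ioo
  have habs_symm : ∀ p : ℝ × ℝ, 0 < p.1 → ‖Complex.polarCoord.symm p‖ = p.1 := by
    intro p hp; rw [Complex.norm_polarCoord_symm]; exact abs_of_pos hp
  have e0 : ∫ z in Metric.ball (0:ℂ) 1, F z = ∫ z, (Metric.ball (0:ℂ) 1).indicator F z :=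
    (integral_indicator measurableSet_ball).symm
  have e1 : ∫ z, (Metric.ball (0:ℂ) 1).indicator F z
      = ∫ p in Complex.polarCoord.target,
          p.1 • (Metric.ball (0:ℂ) 1).indicator F (Complex.polarCoord.symm p) :=
    (Complex.integral_comp_polarCoord_symm _).symm
  have e2 : ∫ p in Complex.polarCoord.target,
        p.1 • (Metric.ball (0:ℂ) 1).indicator F (Complex.polarCoord.symm p)
      = ∫ p in s', p.1 • (Metric.ball (0:ℂ) 1).indicator F (Complex.polarCoord.symm p) := by
    apply setIntegral_eq_of_subset_of_forall_diff_eq_zero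
    · rw [Complex.polarCoord_target]
      exact measurableSet_Ioi.prod measurableSet_Ioo
    · rw [Complex.polarCoord_target, hs']
      exact Set.prod_mono_left Ioo_subset_Ioi_self
    · intro p hp
      obtain ⟨hpt, hps⟩ := hp
      rw [Complex.polarCoord_target] at hpt
      have hp1 : 0 < p.1 := hpt.1
      have hp1' : ¬ p.1 < 1 := by
        intro hlt
        exact hps ⟨⟨hp1, hlt⟩, hpt.2⟩
      have : Complex.polarCoord.symm p ∉ Metric.ball (0:ℂ) 1 := by
        rw [Metric.mem_ball, Complex.dist_eq, sub_zero, habs_symm p hp1]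
        exact hp1'
      simp only [Set.indicator_of_notMem this, smul_zero]
  have e3 : ∫ p in s', p.1 • (Metric.ball (0:ℂ) 1).indicator F (Complex.polarCoord.symm p)
      = ∫ p in s', G p := by
    apply setIntegral_congr_fun hs'meas
    intro p hp
    have hp1 : 0 < p.1 := hp.1.1
    have hmem : Complex.polarCoord.symm p ∈ Metric.ball (0:ℂ) 1 := by
      rw [Metric.mem_ball, Complex.dist_eq, sub_zero, habs_symm p hp1]
      exact hp.1.2
    simp only [Set.indicator_of_mem hmem, smul_eq_mul, hF, hG, habs_symm p hp1]
  have hGint : IntegrableOn G s' := by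
    apply Measure.integrableOn_of_bounded (M := max B 0 * Pb)
    · rw [hs',
        show (volume : Measure (ℝ×ℝ)) = (volume : Measure ℝ).prod volume from
          Measure.volume_eq_prod ℝ ℝ, Measure.prod_prod]
      exact ENNReal.mul_ne_top (by simp [Real.volume_Ioo]) (by simp [Real.volume_Ioo])
    · exact hGmeas.aestronglyMeasurable
    · filter_upwards [ae_restrict_mem hs'meas] with p hp
      have hp1 : 0 < p.1 := hp.1.1
      have hp2 : p.1 < 1 := hp.1.2
      have ht : 1 - p.1 ∈ Ioo (0:ℝ) 1 := ⟨by linarith, by linarith⟩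
      have hPle : poissonWeight z₀ (Complex.polarCoord.symm p) ≤ Pb := by
        apply poissonWeight_le hz₀
        rw [habs_symm p hp1]; exact hp2.le
      have hP0 : 0 ≤ poissonWeight z₀ (Complex.polarCoord.symm p) := poissonWeight_nonneg hz₀ _
      have hφ0' := hφ0 _ ht
      have hφB' := hφB _ ht
      rw [Real.norm_eq_abs, abs_of_nonneg (by rw [hG]; positivity)]
      rw [hG]
      simp only
      calc p.1 * (φ (1-p.1) * poissonWeight z₀ (Complex.polarCoord.symm p))
          ≤ 1 * (max B 0 * Pb) := by
            apply mul_le_mul hp2.le _ (by positivity) zero_le_one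
            exact mul_le_mul (le_max_of_le_left hφB') hPle hP0 (le_max_of_le_right le_rfl)
        _ = max B 0 * Pb := one_mul _
  have e4 : ∫ p in s', G p = ∫ r in Ioo (0:ℝ) 1, ∫ θ in Ioo (-Real.pi) Real.pi, G (r, θ) := by
    rw [hs'] at hGint ⊢
    exact setIntegral_prod _ hGint
  have hIang : ∀ r : ℝ, 0 ≤ ∫ θ in Ioo (-Real.pi) Real.pi,
      poissonWeight z₀ (Complex.polarCoord.symm (r, θ)) :=
    fun r => setIntegral_nonneg measurableSet_Ioo (fun θ _ => poissonWeight_nonneg hz₀ _)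
  have e5 : ∀ r : ℝ, (∫ θ in Ioo (-Real.pi) Real.pi, G (r, θ))
      = (r * φ (1-r)) * ∫ θ in Ioo (-Real.pi) Real.pi,
          poissonWeight z₀ (Complex.polarCoord.symm (r, θ)) := by
    intro r
    rw [← integral_const_mul]
    apply setIntegral_congr_fun measurableSet_Ioo
    intro θ _
    simp only [hG]
    ring
  have e6 : (∫ r in Ioo (0:ℝ) 1, ∫ θ in Ioo (-Real.pi) Real.pi, G (r, θ))
      ≤ ∫ r in Ioo (0:ℝ) 1, K * φ (1-r) := by
    apply integral_mono_of_nonneg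
    · filter_upwards [ae_restrict_mem measurableSet_Ioo] with r hr
      rw [e5 r]
      have ht : 1 - r ∈ Ioo (0:ℝ) 1 := ⟨by linarith [hr.2], by linarith [hr.1]⟩
      exact mul_nonneg (mul_nonneg hr.1.le (hφ0 _ ht)) (hIang r)
    · apply Measure.integrableOn_of_bounded (M := K * max B 0)
      · simp [Real.volume_Ioo]
      · exact (measurable_const.mul (hφm.comp (measurable_const.sub measurable_id))).aestronglyMeasurable
      · filter_upwards [ae_restrict_mem measurableSet_Ioo] with r hr
        have ht : 1 - r ∈ Ioo (0:ℝ) 1 := ⟨by linarith [hr.2], by linarith [hr.1]⟩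
        rw [Real.norm_eq_abs, abs_of_nonneg (mul_nonneg hK0 (hφ0 _ ht))]
        exact mul_le_mul_of_nonneg_left (le_max_of_le_left (hφB _ ht)) hK0
    · filter_upwards [ae_restrict_mem measurableSet_Ioo] with r hr
      rw [e5 r]
      have ht : 1 - r ∈ Ioo (0:ℝ) 1 := ⟨by linarith [hr.2], by linarith [hr.1]⟩
      have hang := angular_bound hz₀ hr.1 hr.2
      calc (r * φ (1-r)) * ∫ θ in Ioo (-Real.pi) Real.pi,
              poissonWeight z₀ (Complex.polarCoord.symm (r, θ))
          ≤ (1 * φ (1-r)) * K := by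
            apply mul_le_mul _ hang (hIang _) (by simpa using hφ0 _ ht)
            exact mul_le_mul_of_nonneg_right hr.2.le (hφ0 _ ht)
        _ = K * φ (1-r) := by ring
  have e7 : ∫ r in Ioo (0:ℝ) 1, K * φ (1-r) = K * ∫ r in Ioo (0:ℝ) 1, φ (1-r) :=
    integral_const_mul _ _
  have e8 : ∫ r in Ioo (0:ℝ) 1, φ (1-r) = ∫ t in Ioo (0:ℝ) 1, φ t := by
    rw [← integral_Ioc_eq_integral_Ioo, ← intervalIntegral.integral_of_le zero_le_one,
      intervalIntegral.integral_comp_sub_left φ 1]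
    norm_num
    rw [intervalIntegral.integral_of_le zero_le_one, integral_Ioc_eq_integral_Ioo]
  rw [e0, e1, e2, e3, e4]
  calc (∫ r in Ioo (0:ℝ) 1, ∫ θ in Ioo (-Real.pi) Real.pi, G (r, θ))
      ≤ ∫ r in Ioo (0:ℝ) 1, K * φ (1-r) := e6
    _ = K * ∫ t in Ioo (0:ℝ) 1, φ t := by rw [e7, e8]

lemma Phi_bounded {q : ℝ} (hq : 1 < q) (k : ℕ) {t : ℝ} (ht : 0 < t) (ht1 : t ≤ 1) :
    Phi q k t ≤ ((2:ℝ)^k)^(-(q-1)) * (1 + ((2:ℝ)^k)^(2*q-2)) := by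
  have h2k : (0:ℝ) < (2:ℝ)^k := by positivity
  refine (Phi_le hq k ht ht1).trans ?_
  apply mul_le_mul_of_nonneg_left _ (Real.rpow_nonneg h2k.le _)
  have hx : (0:ℝ) < (2:ℝ)^k * t := by positivity
  have h1 : ((2:ℝ)^k * t)^(2*q-2) ≤ ((2:ℝ)^k)^(2*q-2) :=
    Real.rpow_le_rpow hx.le (by nlinarith) (by linarith)
  have h2 : Real.exp (-((2:ℝ)^k * t)) ≤ 1 := Real.exp_le_one_iff.2 (by linarith)
  calc Hfun q ((2:ℝ)^k * t) ≤ (1 + ((2:ℝ)^k * t)^(2*q-2)) * 1 := by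
        unfold Hfun
        apply mul_le_mul_of_nonneg_left h2
        have := Real.rpow_nonneg hx.le (2*q-2); linarith
    _ ≤ 1 + ((2:ℝ)^k)^(2*q-2) := by linarith

set_option maxHeartbeats 2000000 in
/-- For `f(z) = Σ_{k=1}^N a_k z^{2^k}`,
`sup_{z₀∈D} ∫_D (1−|z|)^{q−1} ‖f(z)‖^q P_{z₀}(z) dA(z) ≤ C Σ_k 2^{−qk} ‖a_k‖^q`. -/
theorem lacunary_upper_estimate (q : ℝ) (hq : 1 < q) :
    ∃ C : ℝ, 0 < C ∧
      ∀ (B : Type) [NormedAddCommGroup B] [NormedSpace ℂ B] (N : ℕ) (a : ℕ → B),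
        ∀ z₀ ∈ Metric.ball (0 : ℂ) 1,
          (∫ z in Metric.ball (0 : ℂ) 1,
              (1 - ‖z‖) ^ (q - 1) *
                ‖∑ k ∈ Finset.Icc 1 N, z ^ (2 ^ k) • a k‖ ^ q * poissonWeight z₀ z) ≤
            C * ∑ k ∈ Finset.Icc 1 N, (2 : ℝ) ^ (-(q * k)) * ‖a k‖ ^ q := by

  have hπ := Real.pi_pos
  set K : ℝ := 16*Real.pi + 2*Real.pi^2 with hK
  have hK0 : (0:ℝ) ≤ K := by positivity
  set Cq : ℝ := ∫ x in Ioi (0:ℝ), Hfun q x with hCq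
  have hCq0 : 0 ≤ Cq :=
    setIntegral_nonneg measurableSet_Ioi fun x hx => Hfun_nonneg q (le_of_lt hx)
  refine ⟨(4:ℝ)^(q-1) * K * Cq + 1, by positivity, ?_⟩
  intro B _ _ N a z₀ hz₀
  rw [Metric.mem_ball, Complex.dist_eq, sub_zero] at hz₀
  have hP0 : ∀ z : ℂ, 0 ≤ poissonWeight z₀ z := poissonWeight_nonneg hz₀
  have hPmeas : Measurable (poissonWeight z₀) := by
    unfold poissonWeight
    exact measurable_const.div
      (((continuous_norm.comp (continuous_const.sub
        (continuous_const.mul continuous_id))).pow 2).measurable)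
  set c : ℕ → ℝ := fun k => ‖a k‖ with hc
  have hc0 : ∀ k, 0 ≤ c k := fun k => norm_nonneg _
  set G : ℂ → ℝ := fun z => ∑ k ∈ Finset.Icc 1 N,
    ((4:ℝ)^(q-1) * c k ^ q) * (Phi q k (1 - ‖z‖) * poissonWeight z₀ z) with hG
  -- pointwise domination
  have key : ∀ z ∈ Metric.ball (0:ℂ) 1,
      (1 - ‖z‖) ^ (q - 1) *
        ‖∑ k ∈ Finset.Icc 1 N, z ^ (2 ^ k) • a k‖ ^ q * poissonWeight z₀ z ≤ G z := by
    intro z hz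
    rw [Metric.mem_ball, Complex.dist_eq, sub_zero] at hz
    have hr0 : 0 ≤ ‖z‖ := norm_nonneg z
    set r : ℝ := ‖z‖ with hr
    set t : ℝ := 1 - r with htdef
    have ht0 : 0 < t := by rw [htdef]; linarith
    have ht1 : t ≤ 1 := by rw [htdef]; linarith
    have hTP : 0 ≤ t^(q-1) * poissonWeight z₀ z :=
      mul_nonneg (Real.rpow_nonneg ht0.le _) (hP0 z)
    have hnorm : ‖∑ k ∈ Finset.Icc 1 N, z ^ (2^k) • a k‖
        ≤ ∑ k ∈ Finset.Icc 1 N, c k * r ^ (2^k) := by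
      refine (norm_sum_le _ _).trans (Finset.sum_le_sum fun k _ => ?_)
      rw [norm_smul, norm_pow, ← hr]
      simp only [hc]
      exact (mul_comm _ _).le
    have hnorm_q : ‖∑ k ∈ Finset.Icc 1 N, z ^ (2^k) • a k‖ ^ q
        ≤ (∑ k ∈ Finset.Icc 1 N, c k * r ^ (2^k)) ^ q :=
      Real.rpow_le_rpow (norm_nonneg _) hnorm (by linarith)
    set v : ℕ → ℝ := fun k => min ((2:ℝ)^k * t) (((2:ℝ)^k * t)⁻¹) with hv
    have hvpos : ∀ k ∈ Finset.Icc 1 N, 0 < v k := fun k _ =>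
      lt_min (by positivity) (by positivity)
    have hjen := weighted_jensen hq (Finset.Icc 1 N) v (fun k => c k * r^(2^k)) hvpos
      (fun k _ => by have := hc0 k; positivity)
    have hsv0 : 0 ≤ ∑ k ∈ Finset.Icc 1 N, v k :=
      Finset.sum_nonneg fun k hk => (hvpos k hk).le
    have h4 : (∑ k ∈ Finset.Icc 1 N, v k)^(q-1) ≤ (4:ℝ)^(q-1) :=
      Real.rpow_le_rpow hsv0 (dyadic_min_sum_le N ht0 ht1) (by linarith)
    have hterm : ∀ k ∈ Finset.Icc 1 N, (c k * r^(2^k))^q * v k^(1-q)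
        ≤ c k ^ q * (max ((2:ℝ)^k*t) (((2:ℝ)^k*t)⁻¹) ^ (q-1)
            * Real.exp (-(q * ((2:ℝ)^k*t)))) := by
      intro k hk
      have hx : (0:ℝ) < (2:ℝ)^k * t := by positivity
      have hvmax : v k ^ (1-q) = max ((2:ℝ)^k*t) (((2:ℝ)^k*t)⁻¹) ^ (q-1) := by
        have hvp := hvpos k hk
        rw [show (1-q) = -(q-1) by ring, Real.rpow_neg hvp.le, ← Real.inv_rpow hvp.le]
        congr 1
        simp only [hv]
        rcases le_total ((2:ℝ)^k*t) (((2:ℝ)^k*t)⁻¹) with h|h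
        · rw [min_eq_left h, max_eq_right h]
        · rw [min_eq_right h, max_eq_left h, inv_inv]
      have hrq : (r^(2^k))^q ≤ Real.exp (-(q * ((2:ℝ)^k*t))) := by
        have h1 : r ≤ Real.exp (-t) := by
          have := Real.add_one_le_exp (-t)
          rw [htdef] at *
          linarith
        have h2 : r^(2^k) ≤ Real.exp (-t)^(2^k) := pow_le_pow_left₀ hr0 h1 _
        have h3 : Real.exp (-t)^((2:ℕ)^k) = Real.exp (-((((2:ℕ)^k : ℕ):ℝ) * t)) := by
          rw [← Real.exp_nat_mul]; congr 1; ring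
        calc (r^(2^k))^q ≤ (Real.exp (-((((2:ℕ)^k : ℕ):ℝ) * t)))^q := by
              apply Real.rpow_le_rpow (by positivity) _ (by linarith)
              rw [← h3]; exact h2
          _ = Real.exp (-(q * ((2:ℝ)^k * t))) := by
              rw [← Real.exp_mul]; congr 1; push_cast; ring
      have hmul : (c k * r^(2^k))^q = c k ^ q * (r^(2^k))^q :=
        Real.mul_rpow (hc0 k) (by positivity)
      rw [hmul, hvmax]
      calc c k ^ q * (r^(2^k))^q * max ((2:ℝ)^k*t) (((2:ℝ)^k*t)⁻¹) ^ (q-1)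
          = (c k ^ q * max ((2:ℝ)^k*t) (((2:ℝ)^k*t)⁻¹) ^ (q-1)) * (r^(2^k))^q := by ring
        _ ≤ (c k ^ q * max ((2:ℝ)^k*t) (((2:ℝ)^k*t)⁻¹) ^ (q-1))
            * Real.exp (-(q * ((2:ℝ)^k*t))) := by
            apply mul_le_mul_of_nonneg_left hrq
            have h5 : (0:ℝ) ≤ c k ^ q := Real.rpow_nonneg (hc0 k) q
            have h6 : (0:ℝ) ≤ max ((2:ℝ)^k*t) (((2:ℝ)^k*t)⁻¹) ^ (q-1) :=
              Real.rpow_nonneg (le_trans hx.le (le_max_left _ _)) _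
            positivity
        _ = c k ^ q * (max ((2:ℝ)^k*t) (((2:ℝ)^k*t)⁻¹) ^ (q-1)
            * Real.exp (-(q * ((2:ℝ)^k*t)))) := by ring
    have hsum_nonneg : ∀ k ∈ Finset.Icc 1 N, 0 ≤ (c k * r^(2^k))^q * v k^(1-q) := by
      intro k hk
      exact mul_nonneg (Real.rpow_nonneg (by have := hc0 k; positivity) _)
        (Real.rpow_nonneg (hvpos k hk).le _)
    calc (1 - ‖z‖) ^ (q - 1) *
          ‖∑ k ∈ Finset.Icc 1 N, z ^ (2 ^ k) • a k‖ ^ q * poissonWeight z₀ z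
        = ‖∑ k ∈ Finset.Icc 1 N, z ^ (2 ^ k) • a k‖ ^ q * (t^(q-1) * poissonWeight z₀ z) := by
          rw [htdef, hr]; ring
      _ ≤ (∑ k ∈ Finset.Icc 1 N, c k * r ^ (2^k)) ^ q * (t^(q-1) * poissonWeight z₀ z) :=
          mul_le_mul_of_nonneg_right hnorm_q hTP
      _ ≤ ((∑ k ∈ Finset.Icc 1 N, v k)^(q-1)
            * ∑ k ∈ Finset.Icc 1 N, (c k * r^(2^k))^q * v k^(1-q))
            * (t^(q-1) * poissonWeight z₀ z) :=
          mul_le_mul_of_nonneg_right hjen hTP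
      _ ≤ ((4:ℝ)^(q-1)
            * ∑ k ∈ Finset.Icc 1 N, (c k * r^(2^k))^q * v k^(1-q))
            * (t^(q-1) * poissonWeight z₀ z) := by
          apply mul_le_mul_of_nonneg_right _ hTP
          exact mul_le_mul_of_nonneg_right h4 (Finset.sum_nonneg hsum_nonneg)
      _ ≤ ((4:ℝ)^(q-1)
            * ∑ k ∈ Finset.Icc 1 N, c k ^ q * (max ((2:ℝ)^k*t) (((2:ℝ)^k*t)⁻¹) ^ (q-1)
                * Real.exp (-(q * ((2:ℝ)^k*t)))))
            * (t^(q-1) * poissonWeight z₀ z) := by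
          apply mul_le_mul_of_nonneg_right _ hTP
          apply mul_le_mul_of_nonneg_left (Finset.sum_le_sum hterm)
            (Real.rpow_nonneg (by norm_num) _)
      _ = G z := by
          rw [hG]
          simp only [Phi, ← hr, ← htdef]
          rw [Finset.mul_sum, Finset.sum_mul]
          exact Finset.sum_congr rfl fun k _ => by ring
  set Pb : ℝ := (1 - ‖z₀‖ ^ 2) / (1 - ‖z₀‖)^2 with hPbdef
  have hPb0 : 0 ≤ Pb := div_nonneg (by nlinarith [norm_nonneg z₀]) (by positivity)
  have hterm_int : ∀ k ∈ Finset.Icc 1 N, IntegrableOn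
      (fun z => ((4:ℝ)^(q-1) * c k ^ q) * (Phi q k (1 - ‖z‖) * poissonWeight z₀ z))
      (Metric.ball (0:ℂ) 1) := by
    intro k _
    have h2k : (0:ℝ) < (2:ℝ)^k := by positivity
    have hM0 : (0:ℝ) ≤ ((2:ℝ)^k)^(-(q-1)) * (1 + ((2:ℝ)^k)^(2*q-2)) := by
      have := Real.rpow_nonneg h2k.le (2*q-2)
      exact mul_nonneg (Real.rpow_nonneg h2k.le _) (by linarith)
    have hcq : (0:ℝ) ≤ c k ^ q := Real.rpow_nonneg (hc0 k) _
    have h40 : (0:ℝ) ≤ (4:ℝ)^(q-1) := Real.rpow_nonneg (by norm_num) _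
    apply Measure.integrableOn_of_bounded
      (M := ((4:ℝ)^(q-1) * c k ^ q) * ((((2:ℝ)^k)^(-(q-1)) * (1 + ((2:ℝ)^k)^(2*q-2))) * Pb))
    · exact (measure_ball_lt_top).ne
    · exact (measurable_const.mul (((Phi_measurable q k).comp
        (measurable_const.sub continuous_norm.measurable)).mul hPmeas)).aestronglyMeasurable
    · filter_upwards [ae_restrict_mem measurableSet_ball] with z hz
      rw [Metric.mem_ball, Complex.dist_eq, sub_zero] at hz
      have hr0 := norm_nonneg z
      have ht0 : 0 < 1 - ‖z‖ := by linarith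
      have h1 := Phi_bounded hq k ht0 (by linarith)
      have h2 := poissonWeight_le hz₀ (z := z) hz.le
      have hPhi0 := Phi_nonneg q k ht0.le
      rw [Real.norm_eq_abs, abs_of_nonneg
        (mul_nonneg (mul_nonneg h40 hcq) (mul_nonneg hPhi0 (hP0 z)))]
      apply mul_le_mul_of_nonneg_left _ (mul_nonneg h40 hcq)
      exact mul_le_mul h1 h2 (hP0 z) hM0
  have hGint : IntegrableOn G (Metric.ball (0:ℂ) 1) := by
    rw [hG]
    exact integrable_finset_sum _ hterm_int
  have hmono : (∫ z in Metric.ball (0:ℂ) 1,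
        (1 - ‖z‖) ^ (q - 1) *
          ‖∑ k ∈ Finset.Icc 1 N, z ^ (2 ^ k) • a k‖ ^ q * poissonWeight z₀ z)
      ≤ ∫ z in Metric.ball (0:ℂ) 1, G z := by
    apply integral_mono_of_nonneg _ hGint
    · filter_upwards [ae_restrict_mem measurableSet_ball] with z hz
      exact key z hz
    · filter_upwards [ae_restrict_mem measurableSet_ball] with z hz
      rw [Metric.mem_ball, Complex.dist_eq, sub_zero] at hz
      have ht0 : (0:ℝ) ≤ 1 - ‖z‖ := by linarith
      exact mul_nonneg (mul_nonneg (Real.rpow_nonneg ht0 _)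
        (Real.rpow_nonneg (norm_nonneg _) _)) (hP0 z)
  have hsplit : (∫ z in Metric.ball (0:ℂ) 1, G z)
      = ∑ k ∈ Finset.Icc 1 N, ∫ z in Metric.ball (0:ℂ) 1,
          ((4:ℝ)^(q-1) * c k ^ q) * (Phi q k (1 - ‖z‖) * poissonWeight z₀ z) := by
    rw [hG]
    exact integral_finset_sum _ hterm_int
  have per_k : ∀ k ∈ Finset.Icc 1 N,
      (∫ z in Metric.ball (0:ℂ) 1,
        ((4:ℝ)^(q-1) * c k ^ q) * (Phi q k (1 - ‖z‖) * poissonWeight z₀ z))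
      ≤ ((4:ℝ)^(q-1) * K * Cq) * ((2:ℝ)^(-(q*k)) * c k ^ q) := by
    intro k _
    rw [integral_const_mul]
    have hB' : ∀ t' ∈ Ioo (0:ℝ) 1, Phi q k t' ≤ ((2:ℝ)^k)^(-(q-1)) * (1 + ((2:ℝ)^k)^(2*q-2)) :=
      fun t' ht' => Phi_bounded hq k ht'.1 ht'.2.le
    have hrad := radial_poisson_bound (Phi q k) (Phi_measurable q k)
      (fun t' ht' => Phi_nonneg q k ht'.1.le) hB' hz₀
    have h1d := phi_int_bound hq k
    have hcq : (0:ℝ) ≤ c k ^ q := Real.rpow_nonneg (hc0 k) _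
    have h40 : (0:ℝ) ≤ (4:ℝ)^(q-1) := Real.rpow_nonneg (by norm_num) _
    calc ((4:ℝ)^(q-1) * c k ^ q)
          * ∫ z in Metric.ball (0:ℂ) 1, Phi q k (1 - ‖z‖) * poissonWeight z₀ z
        ≤ ((4:ℝ)^(q-1) * c k^q) * (K * ∫ t' in Ioo (0:ℝ) 1, Phi q k t') :=
          mul_le_mul_of_nonneg_left hrad (mul_nonneg h40 hcq)
      _ ≤ ((4:ℝ)^(q-1) * c k^q) * (K * (Cq * (2:ℝ)^(-(q*k)))) :=
          mul_le_mul_of_nonneg_left (mul_le_mul_of_nonneg_left h1d hK0) (mul_nonneg h40 hcq)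
      _ = ((4:ℝ)^(q-1) * K * Cq) * ((2:ℝ)^(-(q*(k:ℝ))) * c k ^ q) := by ring
  have hsum0 : 0 ≤ ∑ k ∈ Finset.Icc 1 N, (2:ℝ)^(-(q*(k:ℝ))) * c k ^ q :=
    Finset.sum_nonneg fun k _ => mul_nonneg (Real.rpow_nonneg (by norm_num) _)
      (Real.rpow_nonneg (hc0 k) _)
  calc (∫ z in Metric.ball (0:ℂ) 1,
        (1 - ‖z‖) ^ (q - 1) *
          ‖∑ k ∈ Finset.Icc 1 N, z ^ (2 ^ k) • a k‖ ^ q * poissonWeight z₀ z)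
      ≤ ∫ z in Metric.ball (0:ℂ) 1, G z := hmono
    _ = ∑ k ∈ Finset.Icc 1 N, ∫ z in Metric.ball (0:ℂ) 1,
          ((4:ℝ)^(q-1) * c k ^ q) * (Phi q k (1 - ‖z‖) * poissonWeight z₀ z) := hsplit
    _ ≤ ∑ k ∈ Finset.Icc 1 N, ((4:ℝ)^(q-1) * K * Cq) * ((2:ℝ)^(-(q*(k:ℝ))) * c k ^ q) :=
        Finset.sum_le_sum per_k
    _ = ((4:ℝ)^(q-1) * K * Cq) * ∑ k ∈ Finset.Icc 1 N, (2:ℝ)^(-(q*(k:ℝ))) * c k ^ q :=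
        (Finset.mul_sum _ _ _).symm
    _ ≤ ((4:ℝ)^(q-1) * K * Cq + 1) * ∑ k ∈ Finset.Icc 1 N, (2:ℝ)^(-(q*(k:ℝ))) * c k ^ q :=
        mul_le_mul_of_nonneg_right (le_add_of_nonneg_right zero_le_one) hsum0
end
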